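/- arXiv:2505.12376 — 8 statements merged into one kernel-verified Lean document; each statement's English description precedes it below -/
import Mathlib

section
/- For every t ≥ 1, the boxicity of the Roberts graph (the complement of a perfect matching on 2t vertices) equals t. -/
def IsIntervalGraph {V : Type*} (G : SimpleGraph V) : Prop :=
  ∃ a b : V → ℝ, ∀ u v : V, u ≠ v →
    (G.Adj u v ↔ (Set.Icc (a u) (b u) ∩ Set.Icc (a v) (b v)).Nonempty)

def IsThresholdGraph {V : Type*} (G : SimpleGraph V) : Prop :=
  ∃ (w : V → ℝ) (S : ℝ), ∀ u v : V, u ≠ v → (G.Adj u v ↔ S ≤ w u + w v)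

noncomputable def boxicity {V : Type*} (G : SimpleGraph V) : ℕ :=
  sInf {d : ℕ | ∃ I : Fin d → SimpleGraph V, (∀ i, IsIntervalGraph (I i)) ∧
    ∀ u v : V, G.Adj u v ↔ (u ≠ v ∧ ∀ i, (I i).Adj u v)}

noncomputable def thresholdDim {V : Type*} (G : SimpleGraph V) : ℕ :=
  sInf {d : ℕ | ∃ I : Fin d → SimpleGraph V, (∀ i, IsThresholdGraph (I i)) ∧
    ∀ u v : V, G.Adj u v ↔ (u ≠ v ∧ ∀ i, (I i).Adj u v)}

def robertsGraph (t : ℕ) : SimpleGraph (Fin t × Fin 2) where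
  Adj u v := u.1 ≠ v.1
  symm := ⟨fun _ _ h => Ne.symm h⟩
  loopless := ⟨fun _ h => h rfl⟩

/-- One separating interval graph: complete except the edge inside fibre `i`. -/
def sepGraph (t : ℕ) (i : Fin t) : SimpleGraph (Fin t × Fin 2) where
  Adj u v := u ≠ v ∧ (u.1 ≠ i ∨ v.1 ≠ i)
  symm := ⟨fun _ _ h => ⟨h.1.symm, h.2.symm⟩⟩
  loopless := ⟨fun u h => h.1 rfl⟩

lemma sepGraph_interval (t : ℕ) (i : Fin t) : IsIntervalGraph (sepGraph t i) := by
  refine ⟨fun u => if u.1 = i ∧ u.2 = 1 then 2 else 0,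
          fun u => if u.1 = i ∧ u.2 = 0 then 0 else 2, ?_⟩
  intro u v huv
  constructor
  · rintro ⟨-, h⟩
    by_cases hu : u.1 = i
    · rcases h with h | h
      · exact absurd hu h
      · -- v.1 ≠ i, v interval is [0,2]; u interval contains 0 or 2
        by_cases hu2 : u.2 = 0
        · exact ⟨0, by simp [hu, hu2], by simp [h]⟩
        · have hu2' : u.2 = 1 := by omega
          exact ⟨2, by simp [hu, hu2, hu2'], by simp [h]⟩
    · by_cases hv : v.1 = i ∧ v.2 = 1
      · exact ⟨2, by simp [hu], by simp [hv]⟩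
      · refine ⟨0, by simp [hu], Set.mem_Icc.2 ⟨by simp [hv], ?_⟩⟩
        by_cases hv0 : v.1 = i ∧ v.2 = 0 <;> simp [hv0]
  · rintro ⟨x, hxu, hxv⟩
    refine ⟨huv, ?_⟩
    by_contra hc
    push_neg at hc
    obtain ⟨hu, hv⟩ := hc
    have hne2 : u.2 ≠ v.2 := fun h => huv (Prod.ext (hu.trans hv.symm) h)
    simp only [Set.mem_Icc] at hxu hxv
    by_cases hu2 : u.2 = 0
    · have hv2 : v.2 = 1 := by omega
      simp [hu, hv, hu2, hv2] at hxu hxv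
      linarith [hxu.2, hxv.1]
    · have hu2' : u.2 = 1 := by omega
      have hv2 : v.2 = 0 := by omega
      simp [hu, hv, hu2', hv2] at hxu hxv
      linarith [hxu.1, hxv.2]

/-- Four closed intervals: if A meets B, D; C meets B, D; and A misses C,
then B meets D. (So C4 is not an interval graph.) -/
lemma helly4 {aA bA aB bB aC bC aD bD : ℝ}
    (hAB : (Set.Icc aA bA ∩ Set.Icc aB bB).Nonempty)
    (hBC : (Set.Icc aB bB ∩ Set.Icc aC bC).Nonempty)
    (hAD : (Set.Icc aA bA ∩ Set.Icc aD bD).Nonempty)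
    (hDC : (Set.Icc aD bD ∩ Set.Icc aC bC).Nonempty)
    (hAC : ¬ (Set.Icc aA bA ∩ Set.Icc aC bC).Nonempty) :
    (Set.Icc aB bB ∩ Set.Icc aD bD).Nonempty := by
  obtain ⟨p, hpA, hpB⟩ := hAB
  obtain ⟨q, hqB, hqC⟩ := hBC
  obtain ⟨r, hrA, hrD⟩ := hAD
  obtain ⟨s, hsD, hsC⟩ := hDC
  simp only [Set.mem_Icc] at hpA hpB hqB hqC hrA hrD hsD hsC
  by_cases h : bA < aC
  · refine ⟨(bA + aC) / 2, Set.mem_Icc.2 ⟨?_, ?_⟩, Set.mem_Icc.2 ⟨?_, ?_⟩⟩ <;> linarith [hpA.2, hpB.1, hpB.2, hqB.1, hqB.2, hqC.1, hrA.2, hrD.1, hrD.2, hsD.1, hsD.2, hsC.1]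
  · have h2 : bC < aA := by
      by_contra h2
      push_neg at h h2
      exact hAC ⟨max aA aC, Set.mem_Icc.2 ⟨le_max_left _ _, max_le (hpA.1.trans hpA.2) h⟩,
        Set.mem_Icc.2 ⟨le_max_right _ _, max_le h2 (hqC.1.trans hqC.2)⟩⟩
    refine ⟨(bC + aA) / 2, Set.mem_Icc.2 ⟨?_, ?_⟩, Set.mem_Icc.2 ⟨?_, ?_⟩⟩ <;> linarith [hpA.1, hpB.1, hpB.2, hqB.1, hqB.2, hqC.2, hrA.1, hrD.1, hrD.2, hsD.1, hsD.2, hsC.2]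

theorem stmt_5 (t : ℕ) (ht : 1 ≤ t) : boxicity (robertsGraph t) = t := by
  have hmem : t ∈ {d : ℕ | ∃ I : Fin d → SimpleGraph (Fin t × Fin 2),
      (∀ i, IsIntervalGraph (I i)) ∧
      ∀ u v, (robertsGraph t).Adj u v ↔ (u ≠ v ∧ ∀ i, (I i).Adj u v)} := by
    refine ⟨fun i => sepGraph t i, fun i => sepGraph_interval t i, ?_⟩
    intro u v
    constructor
    · intro h
      have h' : u.1 ≠ v.1 := h
      have hne : u ≠ v := fun e => h' (congrArg Prod.fst e)
      exact ⟨hne, fun i => ⟨hne, by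
        by_cases hu : u.1 = i
        · exact Or.inr (fun hv => h' (hu.trans hv.symm))
        · exact Or.inl hu⟩⟩
    · rintro ⟨hne, hall⟩
      obtain ⟨-, h⟩ := hall u.1
      show u.1 ≠ v.1
      rcases h with h | h
      · exact absurd rfl h
      · exact fun e => h e.symm
  refine le_antisymm (Nat.sInf_le hmem) (le_csInf ⟨t, hmem⟩ ?_)
  rintro d ⟨I, hI, hiff⟩
  -- every missing matching edge must be missing from some I j
  have hex : ∀ i : Fin t, ∃ j : Fin d, ¬ (I j).Adj (i, 0) (i, 1) := by
    intro i
    have hna : ¬ (robertsGraph t).Adj (i, 0) (i, 1) := by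
      simp [robertsGraph]
    rw [hiff] at hna
    push_neg at hna
    exact hna (by simp)
  choose f hf using hex
  have hadj : ∀ (i i' : Fin t) (x y : Fin 2), i ≠ i' → ∀ j, (I j).Adj (i, x) (i', y) := by
    intro i i' x y hii j
    have : (robertsGraph t).Adj (i, x) (i', y) := hii
    exact ((hiff _ _).1 this).2 j
  have hinj : Function.Injective f := by
    intro i i' hfe
    by_contra hii
    obtain ⟨a, b, hab⟩ := hI (f i)
    have hne1 : ((i, 0) : Fin t × Fin 2) ≠ (i, 1) := by simp
    have hne2 : ((i', 0) : Fin t × Fin 2) ≠ (i', 1) := by simp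
    have hAB := (hab (i, 0) (i', 0) (by simp [hii])).1 (hadj i i' 0 0 hii (f i))
    have hBC := (hab (i', 0) (i, 1) (by simp [Ne.symm hii])).1 (hadj i' i 0 1 (Ne.symm hii) (f i))
    have hAD := (hab (i, 0) (i', 1) (by simp [hii])).1 (hadj i i' 0 1 hii (f i))
    have hDC := (hab (i', 1) (i, 1) (by simp [Ne.symm hii])).1 (hadj i' i 1 1 (Ne.symm hii) (f i))
    have hAC : ¬ (Set.Icc (a (i, 0)) (b (i, 0)) ∩ Set.Icc (a (i, 1)) (b (i, 1))).Nonempty :=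
      fun hne => hf i ((hab (i, 0) (i, 1) hne1).2 hne)
    have hBD := helly4 hAB hBC hAD hDC hAC
    exact hf i' (by rw [← hfe]; exact (hab (i', 0) (i', 1) hne2).2 hBD)
  simpa using Fintype.card_le_of_injective f hinj
end

section
/- Let N = p_1^{n_1} ··· p_a^{n_a} with a ≥ 2. Then the boxicity of the zero divisor graph Γ(Z_N) is at most a; moreover the threshold dimension of Γ(Z_N) is at most a. -/
def zeroDivisorGraph (R : Type*) [CommRing R] :
    SimpleGraph {x : R // x ≠ 0 ∧ ∃ y : R, y ≠ 0 ∧ x * y = 0} :=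
  SimpleGraph.fromRel (fun a b => (a : R) * (b : R) = 0)

lemma interval_key (S wu wv : ℕ) (eu ev : ℝ)
    (hu0 : 0 < eu) (hu1 : eu < 1) (hv0 : 0 < ev) (hv1 : ev < 1)
    (hne : ¬ (wu = wv ∧ eu = ev)) :
    ((Set.Icc (if S ≤ 2*wu then (S:ℝ) - wu else wu + eu)
              (if S ≤ 2*wu then (S:ℝ) else wu + eu)) ∩
     (Set.Icc (if S ≤ 2*wv then (S:ℝ) - wv else wv + ev)
              (if S ≤ 2*wv then (S:ℝ) else wv + ev))).Nonempty ↔ S ≤ wu + wv := by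
  have key : ∀ (x y : ℕ) (e : ℝ), 0 < e → e < 1 →
      ((S:ℝ) - x ≤ y + e ↔ S ≤ x + y) := by
    intro x y e he0 he1
    constructor
    · intro h
      have : (S:ℝ) < x + y + 1 := by linarith
      have := (by exact_mod_cast this : S < x + y + 1)
      omega
    · intro h
      have : (S:ℝ) ≤ x + y := by exact_mod_cast h
      linarith
  rw [Set.Icc_inter_Icc, Set.nonempty_Icc, max_le_iff, le_min_iff, le_min_iff]
  by_cases h1 : S ≤ 2*wu <;> by_cases h2 : S ≤ 2*wv <;>
    simp only [h1, h2, if_true, if_false, if_pos, if_neg, not_false_iff]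
  · -- both clique
    have hu : (0:ℝ) ≤ wu := by positivity
    have hv : (0:ℝ) ≤ wv := by positivity
    constructor
    · intro _; omega
    · intro _; exact ⟨⟨by linarith, by linarith⟩, by linarith, by linarith⟩
  · -- u clique, v point
    have hvS : (wv:ℝ) + ev ≤ S := by
      have : wv + 1 ≤ S := by omega
      have : (wv:ℝ) + 1 ≤ S := by exact_mod_cast this
      linarith
    have hu : (0:ℝ) ≤ wu := by positivity
    constructor
    · rintro ⟨⟨-, h⟩, -⟩
      exact (key wu wv ev hv0 hv1).1 h
    · intro h
      have h' := (key wu wv ev hv0 hv1).2 h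
      exact ⟨⟨by linarith, h'⟩, ⟨hvS, le_refl _⟩⟩
  · -- u point, v clique
    have huS : (wu:ℝ) + eu ≤ S := by
      have : wu + 1 ≤ S := by omega
      have : (wu:ℝ) + 1 ≤ S := by exact_mod_cast this
      linarith
    have hv : (0:ℝ) ≤ wv := by positivity
    constructor
    · rintro ⟨⟨-, -⟩, h, -⟩
      have := (key wv wu eu hu0 hu1).1 h
      omega
    · intro h
      have h' := (key wv wu eu hu0 hu1).2 (by omega)
      exact ⟨⟨le_refl _, huS⟩, ⟨h', by linarith⟩⟩
  · -- both points
    constructor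
    · rintro ⟨⟨-, h1'⟩, h2', -⟩
      have heq : (wu:ℝ) + eu = wv + ev := le_antisymm h1' h2'
      exfalso
      rcases eq_or_ne wu wv with h | h
      · exact hne ⟨h, by subst h; linarith⟩
      · rcases Nat.lt_or_ge wu wv with hlt | hge
        · have : wu + 1 ≤ wv := hlt
          have : (wu:ℝ) + 1 ≤ wv := by exact_mod_cast this
          linarith
        · have hlt : wv < wu := by omega
          have : wv + 1 ≤ wu := hlt
          have : (wv:ℝ) + 1 ≤ wu := by exact_mod_cast this
          linarith
    · intro h; omega

lemma dvd_iff_forall_fact (N a : ℕ) (p n : Fin a → ℕ)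
    (hp : ∀ i, (p i).Prime) (hinj : Function.Injective p)
    (hN : N = ∏ i, p i ^ n i) (m : ℕ) (hm : m ≠ 0) :
    N ∣ m ↔ ∀ i, n i ≤ m.factorization (p i) := by
  have hN0 : N ≠ 0 := by
    rw [hN]
    exact (Finset.prod_pos (fun i _ => pow_pos (hp i).pos (n i))).ne'
  have hfact : N.factorization = ∑ i, Finsupp.single (p i) (n i) := by
    rw [hN, Nat.factorization_prod (fun i _ => (pow_pos (hp i).pos (n i)).ne')]
    exact Finset.sum_congr rfl fun i _ => Nat.Prime.factorization_pow (hp i)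
  have happly : ∀ j, N.factorization (p j) = n j := by
    intro j
    rw [hfact, Finsupp.finset_sum_apply]
    rw [Finset.sum_eq_single j]
    · simp
    · intro i _ hij
      rw [Finsupp.single_apply, if_neg (fun h => hij (hinj h))]
    · simp
  rw [← Nat.factorization_le_iff_dvd hN0 hm, Finsupp.le_def]
  constructor
  · intro h j
    have := h (p j)
    rwa [happly] at this
  · intro h q
    by_cases hq : ∃ j, p j = q
    · obtain ⟨j, rfl⟩ := hq
      rw [happly]; exact h j
    · have : N.factorization q = 0 := by
        rw [hfact, Finsupp.finset_sum_apply]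
        apply Finset.sum_eq_zero
        intro i _
        rw [Finsupp.single_apply, if_neg (fun h' => hq ⟨i, h'⟩)]
      simp [this]

theorem stmt_9 (N a : ℕ) (p n : Fin a → ℕ) (ha : 2 ≤ a)
    (hp : ∀ i, (p i).Prime) (hmono : StrictMono p) (hn : ∀ i, 0 < n i)
    (hN : N = ∏ i, p i ^ n i) :
    boxicity (zeroDivisorGraph (ZMod N)) ≤ a ∧
    thresholdDim (zeroDivisorGraph (ZMod N)) ≤ a := by
  have hN0 : 0 < N := by
    rw [hN]; exact Finset.prod_pos (fun i _ => pow_pos (hp i).pos (n i))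
  haveI : NeZero N := ⟨hN0.ne'⟩
  set V := {x : ZMod N // x ≠ 0 ∧ ∃ y : ZMod N, y ≠ 0 ∧ x * y = 0} with hV
  -- the weights
  let w : Fin a → V → ℕ := fun i x => min (n i) ((x.1.val).factorization (p i))
  have hwle : ∀ i x, w i x ≤ n i := fun i x => min_le_left _ _
  have hval0 : ∀ x : V, x.1.val ≠ 0 := by
    intro x hx
    exact x.2.1 ((ZMod.val_eq_zero x.1).1 hx)
  -- the core equivalence
  have core : ∀ u v : V, ((u.1 : ZMod N) * v.1 = 0 ↔ ∀ i, n i ≤ w i u + w i v) := by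
    intro u v
    have h1 : (u.1 : ZMod N) * v.1 = ((u.1.val * v.1.val : ℕ) : ZMod N) := by
      push_cast
      rw [ZMod.natCast_zmod_val, ZMod.natCast_zmod_val]
    rw [h1, ZMod.natCast_eq_zero_iff,
      dvd_iff_forall_fact N a p n hp hmono.injective hN _
        (Nat.mul_ne_zero (hval0 u) (hval0 v)),
      ]
    have h2 : ∀ i, (u.1.val * v.1.val).factorization (p i) =
        u.1.val.factorization (p i) + v.1.val.factorization (p i) := by
      intro i
      rw [Nat.factorization_mul (hval0 u) (hval0 v)]
      rfl
    constructor
    · intro h i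
      have := h i
      rw [h2 i] at this
      simp only [w]
      omega
    · intro h i
      have := h i
      simp only [w] at this
      rw [h2 i]
      omega
  have adj_iff : ∀ u v : V, (zeroDivisorGraph (ZMod N)).Adj u v ↔
      (u ≠ v ∧ ∀ i, n i ≤ w i u + w i v) := by
    intro u v
    rw [zeroDivisorGraph, SimpleGraph.fromRel_adj]
    constructor
    · rintro ⟨hne, h | h⟩
      · exact ⟨hne, (core u v).1 h⟩
      · refine ⟨hne, (core u v).1 ?_⟩
        rwa [mul_comm]
    · rintro ⟨hne, h⟩
      exact ⟨hne, Or.inl ((core u v).2 h)⟩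
  constructor
  · -- boxicity
    let ε : V → ℝ := fun x => ((x.1.val : ℝ) + 1) / (2 * N)
    have hε0 : ∀ x, 0 < ε x := by
      intro x
      apply div_pos
      · positivity
      · positivity
    have hε1 : ∀ x, ε x < 1 := by
      intro x
      rw [div_lt_one (by positivity)]
      have : x.1.val < N := ZMod.val_lt x.1
      have : (x.1.val : ℝ) < N := by exact_mod_cast this
      have hNr : (1:ℝ) ≤ N := by exact_mod_cast hN0
      linarith
    have hεinj : ∀ u v : V, ε u = ε v → u = v := by
      intro u v h
      have h2N : (2 * N : ℝ) ≠ 0 := by positivity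
      have : (u.1.val : ℝ) = v.1.val := by
        have h' := congrArg (fun t => t * (2 * N : ℝ)) h
        simp only [ε] at h'
        rw [div_mul_cancel₀ _ h2N, div_mul_cancel₀ _ h2N] at h'
        linarith
      have : u.1.val = v.1.val := by exact_mod_cast this
      exact Subtype.ext (ZMod.val_injective N this)
    let A : Fin a → V → ℝ := fun i x =>
      if n i ≤ 2 * w i x then (n i : ℝ) - w i x else w i x + ε x
    let B : Fin a → V → ℝ := fun i x =>
      if n i ≤ 2 * w i x then (n i : ℝ) else w i x + ε x
    have keyJ : ∀ i (u v : V), u ≠ v →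
        ((Set.Icc (A i u) (B i u) ∩ Set.Icc (A i v) (B i v)).Nonempty ↔
          n i ≤ w i u + w i v) := by
      intro i u v huv
      exact interval_key (n i) (w i u) (w i v) (ε u) (ε v)
        (hε0 u) (hε1 u) (hε0 v) (hε1 v)
        (fun ⟨_, he⟩ => huv (hεinj u v he))
    let J : Fin a → SimpleGraph V := fun i => SimpleGraph.fromRel
      (fun u v => (Set.Icc (A i u) (B i u) ∩ Set.Icc (A i v) (B i v)).Nonempty)
    have hJadj : ∀ i (u v : V), (J i).Adj u v ↔
        (u ≠ v ∧ (Set.Icc (A i u) (B i u) ∩ Set.Icc (A i v) (B i v)).Nonempty) := by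
      intro i u v
      rw [SimpleGraph.fromRel_adj]
      constructor
      · rintro ⟨hne, h | h⟩
        · exact ⟨hne, h⟩
        · exact ⟨hne, by rwa [Set.inter_comm]⟩
      · rintro ⟨hne, h⟩; exact ⟨hne, Or.inl h⟩
    apply Nat.sInf_le
    refine ⟨J, fun i => ⟨A i, B i, fun u v huv => (hJadj i u v).trans ?_⟩, ?_⟩
    · simp [huv]
    · intro u v
      rw [adj_iff]
      constructor
      · rintro ⟨hne, h⟩
        exact ⟨hne, fun i => (hJadj i u v).2 ⟨hne, (keyJ i u v hne).2 (h i)⟩⟩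
      · rintro ⟨hne, h⟩
        exact ⟨hne, fun i => (keyJ i u v hne).1 ((hJadj i u v).1 (h i)).2⟩
  · -- thresholdDim
    let T : Fin a → SimpleGraph V := fun i => SimpleGraph.fromRel
      (fun u v => n i ≤ w i u + w i v)
    have hTadj : ∀ i (u v : V), (T i).Adj u v ↔ (u ≠ v ∧ n i ≤ w i u + w i v) := by
      intro i u v
      rw [SimpleGraph.fromRel_adj]
      constructor
      · rintro ⟨hne, h | h⟩
        · exact ⟨hne, h⟩
        · exact ⟨hne, by omega⟩
      · rintro ⟨hne, h⟩; exact ⟨hne, Or.inl h⟩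
    apply Nat.sInf_le
    refine ⟨T, fun i => ⟨fun x => (w i x : ℝ), (n i : ℝ), fun u v huv => ?_⟩, ?_⟩
    · rw [hTadj i u v]
      constructor
      · rintro ⟨-, h⟩
        show (n i : ℝ) ≤ (w i u : ℝ) + (w i v : ℝ)
        exact_mod_cast h
      · intro h
        have h' : (n i : ℝ) ≤ (w i u : ℝ) + (w i v : ℝ) := h
        exact ⟨huv, by exact_mod_cast h'⟩
    · intro u v
      rw [adj_iff]
      constructor
      · rintro ⟨hne, h⟩
        exact ⟨hne, fun i => (hTadj i u v).2 ⟨hne, h i⟩⟩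
      · rintro ⟨hne, h⟩
        exact ⟨hne, fun i => ((hTadj i u v).1 (h i)).2⟩
end

section
/- Let N = p_1^{n_1} ··· p_a^{n_a} with a ≥ 2. If N ≢ 2 (mod 4), then box(Γ(Z_N)) ≥ a. -/
set_option linter.unreachableTactic false
set_option linter.unusedTactic false

lemma interval_helper (a1 b1 a2 b2 a3 b3 a4 b4 : ℝ)
    (h12 : ¬(Set.Icc a1 b1 ∩ Set.Icc a2 b2).Nonempty)
    (h34 : ¬(Set.Icc a3 b3 ∩ Set.Icc a4 b4).Nonempty)
    (h13 : (Set.Icc a1 b1 ∩ Set.Icc a3 b3).Nonempty)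
    (h14 : (Set.Icc a1 b1 ∩ Set.Icc a4 b4).Nonempty)
    (h23 : (Set.Icc a2 b2 ∩ Set.Icc a3 b3).Nonempty)
    (h24 : (Set.Icc a2 b2 ∩ Set.Icc a4 b4).Nonempty) : False := by
  simp only [Set.Icc_inter_Icc, Set.nonempty_Icc, le_min_iff, max_le_iff] at *
  obtain ⟨⟨h1, h2⟩, h3, h4⟩ := h13
  obtain ⟨⟨-, h5⟩, h6, h6'⟩ := h14
  obtain ⟨⟨h7, h8⟩, h9, -⟩ := h23
  obtain ⟨⟨-, h10⟩, h11, -⟩ := h24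
  have hA : b2 < a1 ∨ b1 < a2 := by
    by_contra hc
    push_neg at hc
    exact h12 ⟨⟨h1, hc.2⟩, hc.1, h7⟩
  have hB : b4 < a3 ∨ b3 < a4 := by
    by_contra hc
    push_neg at hc
    exact h34 ⟨⟨h4, hc.2⟩, hc.1, h6'⟩
  rcases hA with hA | hA <;> rcases hB with hB | hB <;> linarith

/-- complete graph minus one edge {s,t} -/
def Kminus {V : Type*} (s t : V) : SimpleGraph V where
  Adj x y := x ≠ y ∧ ¬(x = s ∧ y = t) ∧ ¬(x = t ∧ y = s)
  symm := by constructor; intro x y ⟨h1, h2, h3⟩; exact ⟨h1.symm, fun ⟨a,b⟩ => h3 ⟨b,a⟩, fun ⟨a,b⟩ => h2 ⟨b,a⟩⟩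
  loopless := by constructor; intro x ⟨h, _⟩; exact h rfl

open Classical in
lemma Kminus_interval {V : Type*} (s t : V) (hst : s ≠ t) : IsIntervalGraph (Kminus s t) := by
  refine ⟨fun x => if x = t then 2 else 0, fun x => if x = s then 0 else 2, ?_⟩
  intro u v huv
  simp only [Kminus, Set.Icc_inter_Icc, Set.nonempty_Icc, le_min_iff, max_le_iff]
  constructor
  · rintro ⟨-, h1, h2⟩
    by_cases hus : u = s <;> by_cases hvt : v = t
    · exact absurd ⟨hus, hvt⟩ h1
    all_goals by_cases hut : u = t <;> by_cases hvs : v = s <;>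
      simp_all <;> norm_num
  · intro h
    refine ⟨huv, ?_, ?_⟩
    · rintro ⟨rfl, rfl⟩
      simp [hst, Ne.symm hst] at h; norm_num at h
    · rintro ⟨rfl, rfl⟩
      simp [hst, Ne.symm hst] at h; norm_num at h

lemma top_interval {V : Type*} : IsIntervalGraph (⊤ : SimpleGraph V) := by
  refine ⟨fun _ => 0, fun _ => 1, fun u v huv => ?_⟩
  simp only [SimpleGraph.top_adj, Set.Icc_inter_Icc]
  simp [huv, Set.nonempty_Icc]

open Classical in
lemma exists_rep {V : Type*} [Finite V] (G : SimpleGraph V) :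
    ∃ d, ∃ I : Fin d → SimpleGraph V, (∀ i, IsIntervalGraph (I i)) ∧
      ∀ u v : V, G.Adj u v ↔ (u ≠ v ∧ ∀ i, (I i).Adj u v) := by
  obtain ⟨d, ⟨e⟩⟩ := Finite.exists_equiv_fin (V × V)
  refine ⟨d, fun k => if G.Adj (e.symm k).1 (e.symm k).2 ∨ (e.symm k).1 = (e.symm k).2
      then ⊤ else Kminus (e.symm k).1 (e.symm k).2, fun k => ?_, fun u v => ?_⟩
  · dsimp only
    split_ifs with h
    · exact top_interval
    · push_neg at h
      exact Kminus_interval _ _ h.2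
  · constructor
    · intro hadj
      refine ⟨hadj.ne, fun k => ?_⟩
      dsimp only
      split_ifs with h
      · exact hadj.ne
      · push_neg at h
        refine ⟨hadj.ne, ?_, ?_⟩
        · rintro ⟨rfl, rfl⟩; exact h.1 hadj
        · rintro ⟨rfl, rfl⟩; exact h.1 hadj.symm
    · rintro ⟨hne, hall⟩
      by_contra hadj
      have := hall (e (u, v))
      simp only [Equiv.symm_apply_apply] at this
      rw [if_neg (by simp [hadj, hne])] at this
      exact this.2.1 ⟨rfl, rfl⟩

lemma roberts_bound {V : Type*} [Finite V] (G : SimpleGraph V) (a : ℕ) (x y : Fin a → V)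
    (hxy : ∀ i, x i ≠ y i) (hnadj : ∀ i, ¬ G.Adj (x i) (y i))
    (hxx : ∀ i j, i ≠ j → G.Adj (x i) (x j))
    (hxyc : ∀ i j, i ≠ j → G.Adj (x i) (y j))
    (hyy : ∀ i j, i ≠ j → G.Adj (y i) (y j)) : a ≤ boxicity G := by
  unfold boxicity
  obtain ⟨d0, I0, h1, h2⟩ := exists_rep G
  refine le_csInf ⟨d0, I0, h1, h2⟩ ?_
  rintro d ⟨I, hI, hiff⟩
  have key : ∀ i, ∃ k, ¬ (I k).Adj (x i) (y i) := by
    intro i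
    by_contra h
    push_neg at h
    exact hnadj i ((hiff _ _).mpr ⟨hxy i, h⟩)
  choose k hk using key
  have hinj : Function.Injective k := by
    intro i j hij
    by_contra hne
    obtain ⟨A, B, hrep⟩ := hI (k i)
    have adj : ∀ u v, G.Adj u v → (I (k i)).Adj u v := fun u v h => ((hiff u v).mp h).2 (k i)
    have e13 := (hrep _ _ (hxx i j hne).ne).mp (adj _ _ (hxx i j hne))
    have e14 := (hrep _ _ (hxyc i j hne).ne).mp (adj _ _ (hxyc i j hne))
    have e23 := (hrep _ _ (hxyc j i (Ne.symm hne)).ne.symm).mp (adj _ _ (hxyc j i (Ne.symm hne)).symm)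
    have e24 := (hrep _ _ (hyy i j hne).ne).mp (adj _ _ (hyy i j hne))
    have e12 := (hrep _ _ (hxy i)).not.mp (hk i)
    have e34 : ¬ (Set.Icc (A (x j)) (B (x j)) ∩ Set.Icc (A (y j)) (B (y j))).Nonempty := by
      have := hk j; rw [← hij] at this
      exact (hrep _ _ (hxy j)).not.mp this
    exact interval_helper _ _ _ _ _ _ _ _ e12 e34 e13 e14 e23 e24
  calc a = Fintype.card (Fin a) := by simp
    _ ≤ Fintype.card (Fin d) := Fintype.card_le_of_injective k hinj
    _ = d := by simp

theorem stmt_10 (N a : ℕ) (p n : Fin a → ℕ) (ha : 2 ≤ a)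
    (hp : ∀ i, (p i).Prime) (hmono : StrictMono p) (hn : ∀ i, 0 < n i)
    (hN : N = ∏ i, p i ^ n i) (hmod : N % 4 ≠ 2) :
    a ≤ boxicity (zeroDivisorGraph (ZMod N)) := by
  classical
  set q : Fin a → ℕ := fun i => p i ^ n i with hq
  set m : Fin a → ℕ := fun i => ∏ j ∈ Finset.univ.erase i, p j ^ n j with hm
  have hNi : ∀ i, N = q i * m i := fun i => by
    rw [hN]
    exact (Finset.mul_prod_erase Finset.univ _ (Finset.mem_univ i)).symm
  have hq2 : ∀ i, 2 ≤ q i := fun i =>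
    le_trans (hp i).two_le (Nat.le_self_pow (hn i).ne' _)
  have hmpos : ∀ i, 0 < m i := fun i =>
    Finset.prod_pos fun j _ => pow_pos (hp j).pos _
  have hN0 : 0 < N := by
    rw [hNi ⟨0, by omega⟩]
    exact Nat.mul_pos (by have := hq2 ⟨0, by omega⟩; omega) (hmpos _)
  have hpm : ∀ i, ¬ p i ∣ m i := by
    intro i hdvd
    obtain ⟨j, hj, hdj⟩ := (hp i).prime.exists_mem_finset_dvd hdvd
    have h1 : p i ∣ p j := (hp i).dvd_of_dvd_pow hdj
    have h2 : i = j := hmono.injective ((Nat.prime_dvd_prime_iff_eq (hp i) (hp j)).mp h1)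
    exact (Finset.mem_erase.mp hj).1 h2.symm
  have hqm : ∀ i j, i ≠ j → q i ∣ m j := fun i j h =>
    Finset.dvd_prod_of_mem _ (Finset.mem_erase.mpr ⟨h, Finset.mem_univ i⟩)
  have hq_not2 : ∀ i, ¬ q i ∣ 2 := by
    intro i h
    have hqi : q i = 2 := le_antisymm (Nat.le_of_dvd two_pos h) (hq2 i)
    have hpi2 : p i ∣ 2 := hqi ▸ dvd_pow_self (p i) (hn i).ne'
    have hpieq : p i = 2 := (Nat.prime_dvd_prime_iff_eq (hp i) Nat.prime_two).mp hpi2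
    have hmodd : ¬ 2 ∣ m i := hpieq ▸ hpm i
    have hNe : N = 2 * m i := hqi ▸ hNi i
    omega
  have h4 : ∀ i, p i = 2 → 4 ∣ q i := by
    intro i h2
    have hni : 2 ≤ n i := by
      by_contra hc
      have hni1 : n i = 1 := by have := hn i; omega
      exact hq_not2 i (by rw [hq]; simp only [hni1, h2, pow_one]; exact dvd_rfl)
    have : (2:ℕ)^2 ∣ 2 ^ (n i) := pow_dvd_pow 2 hni
    rw [hq]; simpa [h2] using this
  have hqdm : ∀ j c, c = 1 ∨ c = 2 → ¬ q j ∣ c * m j := by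
    rintro j c (rfl | rfl) hd
    · rw [one_mul] at hd
      exact hpm j ((dvd_pow_self (p j) (hn j).ne').trans hd)
    · by_cases h2 : p j = 2
      · have h4d : 4 ∣ 2 * m j := (h4 j h2).trans hd
        have : 2 ∣ m j := by omega
        exact hpm j (h2 ▸ this)
      · have hpj : p j ∣ 2 * m j := (dvd_pow_self (p j) (hn j).ne').trans hd
        rcases ((hp j).dvd_mul).mp hpj with h | h
        · exact h2 ((Nat.prime_dvd_prime_iff_eq (hp j) Nat.prime_two).mp h)
        · exact hpm j h
  have hcop : ∀ i, Nat.Coprime (q i) (m i) := fun i =>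
    Nat.Coprime.pow_left _ (((hp i).coprime_iff_not_dvd).mpr (hpm i))
  haveI : NeZero N := ⟨hN0.ne'⟩
  -- nonzero facts
  have hNm : ∀ i, ¬ N ∣ m i := by
    intro i h
    have := Nat.le_of_dvd (hmpos i) h
    have := hNi i; have := hq2 i; have := hmpos i
    nlinarith
  have hN2m : ∀ i, ¬ N ∣ 2 * m i := by
    intro i h
    rw [hNi i] at h
    exact hq_not2 i ((Nat.mul_dvd_mul_iff_right (hmpos i)).mp h)
  have hz : ∀ i j, i ≠ j → ∀ c d : ℕ, N ∣ (c * m i) * (d * m j) := by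
    intro i j hij c d
    obtain ⟨t, ht⟩ := hqm i j hij
    exact ⟨c * d * t, by rw [hNi i, ht]; ring⟩
  have hnz : ∀ i, ¬ N ∣ (m i) * (2 * m i) := by
    intro i h
    rw [hNi i, show m i * (2 * m i) = (2 * m i) * m i by ring] at h
    have := (Nat.mul_dvd_mul_iff_right (hmpos i)).mp h
    exact hq_not2 i ((hcop i).dvd_of_dvd_mul_right this)
  -- distinctness
  have hne : ∀ i j, i ≠ j → ∀ c d : ℕ, (c = 1 ∨ c = 2) → (d = 1 ∨ d = 2) →
      ((c * m i : ℕ) : ZMod N) ≠ ((d * m j : ℕ) : ZMod N) := by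
    intro i j hij c d hc hd h
    rw [ZMod.natCast_eq_natCast_iff] at h
    have hqjN : q j ∣ N := ⟨m j, hNi j⟩
    have h2 : c * m i ≡ d * m j [MOD q j] := h.of_dvd hqjN
    have h3 : c * m i ≡ 0 [MOD q j] :=
      (Nat.modEq_zero_iff_dvd).mpr ((hqm j i (Ne.symm hij)).trans (dvd_mul_left _ _))
    have h4' : d * m j ≡ 0 [MOD q j] := h2.symm.trans h3
    exact hqdm j d hd ((Nat.modEq_zero_iff_dvd).mp h4')
  have hxyne : ∀ i, ((m i : ℕ) : ZMod N) ≠ (((2 * m i : ℕ)) : ZMod N) := by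
    intro i h
    rw [ZMod.natCast_eq_natCast_iff] at h
    have hle : m i ≤ 2 * m i := by omega
    have := (Nat.modEq_iff_dvd' hle).mp h
    rw [show 2 * m i - m i = m i by omega] at this
    exact hNm i this
  -- vertices
  have hother : ∀ i : Fin a, ∃ j : Fin a, j ≠ i := by
    intro i
    by_cases h : i.val = 0
    · exact ⟨⟨1, by omega⟩, by intro hc; rw [Fin.ext_iff] at hc; simp at hc; omega⟩
    · exact ⟨⟨0, by omega⟩, by intro hc; rw [Fin.ext_iff] at hc; simp at hc; omega⟩
  have hX0 : ∀ i, ((m i : ℕ) : ZMod N) ≠ 0 := by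
    intro i h
    exact hNm i ((ZMod.natCast_eq_zero_iff _ _).mp h)
  have hY0 : ∀ i, (((2 * m i : ℕ)) : ZMod N) ≠ 0 := by
    intro i h
    exact hN2m i ((ZMod.natCast_eq_zero_iff _ _).mp h)
  have hzC : ∀ i j, i ≠ j → ∀ c d : ℕ,
      ((c * m i : ℕ) : ZMod N) * ((d * m j : ℕ) : ZMod N) = 0 := by
    intro i j hij c d
    rw [← Nat.cast_mul, ZMod.natCast_eq_zero_iff]
    exact hz i j hij c d
  have memX : ∀ i, ((m i : ℕ) : ZMod N) ≠ 0 ∧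
      ∃ y : ZMod N, y ≠ 0 ∧ ((m i : ℕ) : ZMod N) * y = 0 := by
    intro i
    obtain ⟨j, hj⟩ := hother i
    refine ⟨hX0 i, ((m j : ℕ) : ZMod N), hX0 j, ?_⟩
    have := hzC i j (Ne.symm hj) 1 1
    simpa using this
  have memY : ∀ i, (((2 * m i : ℕ)) : ZMod N) ≠ 0 ∧
      ∃ y : ZMod N, y ≠ 0 ∧ (((2 * m i : ℕ)) : ZMod N) * y = 0 := by
    intro i
    obtain ⟨j, hj⟩ := hother i
    refine ⟨hY0 i, ((m j : ℕ) : ZMod N), hX0 j, ?_⟩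
    have := hzC i j (Ne.symm hj) 2 1
    simpa using this
  set V := {x : ZMod N // x ≠ 0 ∧ ∃ y : ZMod N, y ≠ 0 ∧ x * y = 0} with hV
  set G := zeroDivisorGraph (ZMod N) with hG
  let u : Fin a → V := fun i => ⟨((m i : ℕ) : ZMod N), memX i⟩
  let w : Fin a → V := fun i => ⟨(((2 * m i : ℕ)) : ZMod N), memY i⟩
  have hadj : ∀ (s t : V), (s : ZMod N) ≠ (t : ZMod N) → (s : ZMod N) * t = 0 → G.Adj s t := by
    intro s t hst hmul
    rw [hG, zeroDivisorGraph, SimpleGraph.fromRel_adj]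
    exact ⟨fun h => hst (congrArg Subtype.val h), Or.inl hmul⟩
  have huw : ∀ i, u i ≠ w i := by
    intro i h
    exact hxyne i (congrArg Subtype.val h)
  have hnadj : ∀ i, ¬ G.Adj (u i) (w i) := by
    intro i h
    rw [hG, zeroDivisorGraph, SimpleGraph.fromRel_adj] at h
    have hprod : ((m i : ℕ) : ZMod N) * (((2 * m i : ℕ)) : ZMod N) ≠ 0 := by
      intro hc
      rw [← Nat.cast_mul, ZMod.natCast_eq_zero_iff] at hc
      exact hnz i hc
    rcases h.2 with h | h
    · exact hprod h
    · exact hprod (by rwa [mul_comm] at h)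
  have hxx : ∀ i j, i ≠ j → G.Adj (u i) (u j) := by
    intro i j hij
    refine hadj _ _ ?_ ?_
    · have := hne i j hij 1 1 (Or.inl rfl) (Or.inl rfl); simpa using this
    · have := hzC i j hij 1 1; simpa using this
  have hxyc : ∀ i j, i ≠ j → G.Adj (u i) (w j) := by
    intro i j hij
    refine hadj _ _ ?_ ?_
    · have := hne i j hij 1 2 (Or.inl rfl) (Or.inr rfl); simpa [u, w] using this
    · have := hzC i j hij 1 2; simpa [u, w] using this
  have hyy : ∀ i j, i ≠ j → G.Adj (w i) (w j) := by
    intro i j hij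
    refine hadj _ _ ?_ ?_
    · have := hne i j hij 2 2 (Or.inr rfl) (Or.inr rfl); simpa [u, w] using this
    · have := hzC i j hij 2 2; simpa [u, w] using this
  exact roberts_bound G a u w huw hnadj hxx hxyc hyy
end

section
/- Let N = p_1^{n_1} ··· p_a^{n_a} with a ≥ 2, N ≡ 2 (mod 4), and n_i ≤ 2 for all i ≥ 2. Then box(Γ(Z_N)) = a - 1. -/
set_option linter.unreachableTactic false
set_option linter.unusedTactic false
set_option linter.unnecessarySimpa false

open Set in
lemma zmeet_iff (a1 b1 a2 b2 : ℝ) :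
    (Set.Icc a1 b1 ∩ Set.Icc a2 b2).Nonempty ↔
      (a1 ≤ b1 ∧ a1 ≤ b2) ∧ a2 ≤ b1 ∧ a2 ≤ b2 := by
  rw [Set.Icc_inter_Icc, Set.nonempty_Icc, sup_le_iff, le_inf_iff, le_inf_iff]

noncomputable def zlo (e fa r : ℕ) (d : ℝ) : ℝ :=
  if r = 0 then (if fa = 0 then d else if e ≤ fa then 0 else 2)
  else (if fa = 0 then 4 + d else if e ≤ fa then 0 else 13/5 + d/10)

noncomputable def zhi (e fa r : ℕ) (d : ℝ) : ℝ :=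
  if r = 0 then (if fa = 0 then d else if e ≤ fa then 6 else 3)
  else (if fa = 0 then 4 + d else if e ≤ fa then 5/2 else 13/5 + d/10)

lemma zmeet_of_ok {e f1 f2 r1 r2 : ℕ} {d1 d2 : ℝ}
    (he1 : 1 ≤ e) (he2 : e ≤ 2)
    (hd1 : 0 < d1) (hd1' : d1 < 1) (hd2 : 0 < d2) (hd2' : d2 < 1)
    (hsum : e ≤ f1 + f2) (hpar : r1 = 0 ∨ r2 = 0) :
    (Set.Icc (zlo e f1 r1 d1) (zhi e f1 r1 d1) ∩
      Set.Icc (zlo e f2 r2 d2) (zhi e f2 r2 d2)).Nonempty := by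
  rw [zmeet_iff]
  unfold zlo zhi
  split_ifs <;> norm_num <;> first | omega | (constructor <;> linarith) | linarith

set_option maxHeartbeats 1000000 in
lemma zmeet_not_fail {e f1 f2 r1 r2 : ℕ} {d1 d2 : ℝ}
    (he2 : e ≤ 2)
    (hd1 : 0 < d1) (hd1' : d1 < 1) (hd2 : 0 < d2) (hd2' : d2 < 1)
    (hsum : f1 + f2 < e) (hdne : d1 ≠ d2) :
    ¬ (Set.Icc (zlo e f1 r1 d1) (zhi e f1 r1 d1) ∩
      Set.Icc (zlo e f2 r2 d2) (zhi e f2 r2 d2)).Nonempty := by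
  rw [zmeet_iff]
  unfold zlo zhi
  split_ifs <;>
    rintro ⟨⟨h11, h12⟩, h21, h22⟩ <;>
    first
      | omega
      | linarith
      | (rcases hdne.lt_or_gt with hlt | hlt <;> linarith)

set_option maxHeartbeats 1000000 in
lemma zmeet_not_odd {e f1 f2 r1 r2 : ℕ} {d1 d2 : ℝ}
    (hd1 : 0 < d1) (hd1' : d1 < 1) (hd2 : 0 < d2) (hd2' : d2 < 1)
    (hr1 : r1 ≠ 0) (hr2 : r2 ≠ 0) (hfull : f1 < e ∨ f2 < e) (hdne : d1 ≠ d2) :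
    ¬ (Set.Icc (zlo e f1 r1 d1) (zhi e f1 r1 d1) ∩
      Set.Icc (zlo e f2 r2 d2) (zhi e f2 r2 d2)).Nonempty := by
  rw [zmeet_iff]
  unfold zlo zhi
  split_ifs <;>
    rintro ⟨⟨h11, h12⟩, h21, h22⟩ <;>
    first
      | omega
      | linarith
      | (rcases hdne.lt_or_gt with hlt | hlt <;> linarith)

lemma cross_contra (a1 b1 a2 b2 a3 b3 a4 b4 : ℝ)
    (h12 : ¬ (Set.Icc a1 b1 ∩ Set.Icc a2 b2).Nonempty)
    (h34 : ¬ (Set.Icc a3 b3 ∩ Set.Icc a4 b4).Nonempty)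
    (h13 : (Set.Icc a1 b1 ∩ Set.Icc a3 b3).Nonempty)
    (h14 : (Set.Icc a1 b1 ∩ Set.Icc a4 b4).Nonempty)
    (h23 : (Set.Icc a2 b2 ∩ Set.Icc a3 b3).Nonempty)
    (h24 : (Set.Icc a2 b2 ∩ Set.Icc a4 b4).Nonempty) : False := by
  rw [zmeet_iff] at h13 h14 h23 h24
  obtain ⟨⟨hb1, h1b3⟩, h3b1, hb3⟩ := h13
  obtain ⟨⟨-, h1b4⟩, h4b1, hb4⟩ := h14
  obtain ⟨⟨hb2, h2b3⟩, h3b2, -⟩ := h23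
  obtain ⟨⟨-, h2b4⟩, h4b2, -⟩ := h24
  have k12 : b1 < a2 ∨ b2 < a1 := by
    by_contra hc
    push_neg at hc
    exact h12 (by rw [zmeet_iff]; exact ⟨⟨hb1, hc.2⟩, hc.1, hb2⟩)
  have k34 : b3 < a4 ∨ b4 < a3 := by
    by_contra hc
    push_neg at hc
    exact h34 (by rw [zmeet_iff]; exact ⟨⟨hb3, hc.2⟩, hc.1, hb4⟩)
  rcases k12 with h | h <;> rcases k34 with g | g <;> linarith

lemma nat_prod_dvd {ι : Type*} [DecidableEq ι] {f : ι → ℕ} {z : ℕ} (t : Finset ι)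
    (hc : ∀ i ∈ t, ∀ j ∈ t, i ≠ j → Nat.Coprime (f i) (f j))
    (hd : ∀ i ∈ t, f i ∣ z) : (∏ i ∈ t, f i) ∣ z := by
  induction t using Finset.induction_on with
  | empty => simpa using one_dvd z
  | insert _ _ ha ih =>
      rename_i b t'
      rw [Finset.prod_insert ha]
      refine Nat.Coprime.mul_dvd_of_dvd_of_dvd ?_ (hd b (Finset.mem_insert_self b t'))
        (ih (fun i hi j hj hij => hc i (Finset.mem_insert_of_mem hi) j
          (Finset.mem_insert_of_mem hj) hij)
          (fun i hi => hd i (Finset.mem_insert_of_mem hi)))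
      exact Nat.Coprime.prod_right fun j hj => hc b (Finset.mem_insert_self b t') j
        (Finset.mem_insert_of_mem hj) (by rintro rfl; exact ha hj)

noncomputable def coordLo (N q e : ℕ) (x : ZMod N) : ℝ :=
  zlo e ((x.val).factorization q) (x.val % 2) ((x.val + 1) / (N + 2))

noncomputable def coordHi (N q e : ℕ) (x : ZMod N) : ℝ :=
  zhi e ((x.val).factorization q) (x.val % 2) ((x.val + 1) / (N + 2))

noncomputable def coordGraph (N q e : ℕ) :
    SimpleGraph {x : ZMod N // x ≠ 0 ∧ ∃ y : ZMod N, y ≠ 0 ∧ x * y = 0} :=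
  SimpleGraph.fromRel (fun u v =>
    (Set.Icc (coordLo N q e u.1) (coordHi N q e u.1) ∩
      Set.Icc (coordLo N q e v.1) (coordHi N q e v.1)).Nonempty)

lemma coordGraph_adj (N q e : ℕ) (u v) (hne : u ≠ v) :
    (coordGraph N q e).Adj u v ↔
      (Set.Icc (coordLo N q e u.1) (coordHi N q e u.1) ∩
        Set.Icc (coordLo N q e v.1) (coordHi N q e v.1)).Nonempty := by
  rw [coordGraph, SimpleGraph.fromRel_adj]
  constructor
  · rintro ⟨-, h | h⟩
    · exact h
    · rwa [Set.inter_comm] at h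
  · exact fun h => ⟨hne, Or.inl h⟩

lemma coordGraph_isInterval (N q e : ℕ) : IsIntervalGraph (coordGraph N q e) :=
  ⟨fun u => coordLo N q e u.1, fun u => coordHi N q e u.1,
    fun u v huv => coordGraph_adj N q e u v huv⟩

theorem stmt_11 (N a : ℕ) (p n : Fin a → ℕ) (ha : 2 ≤ a)
    (hp : ∀ i, (p i).Prime) (hmono : StrictMono p) (hn : ∀ i, 0 < n i)
    (hN : N = ∏ i, p i ^ n i) (hmod : N % 4 = 2)
    (hsmall : ∀ i, p i ≠ 2 → n i ≤ 2) :
    boxicity (zeroDivisorGraph (ZMod N)) = a - 1 := by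
  classical
  have hN0 : N ≠ 0 := by omega
  haveI : NeZero N := ⟨hN0⟩
  haveI : NeZero a := ⟨by omega⟩
  -- prime power pieces
  set A : Fin a → ℕ := fun i => p i ^ n i with hA
  set s : Fin a → ℕ := fun i => ∏ j ∈ Finset.univ.erase i, A j with hs
  have hApos : ∀ i, 0 < A i := fun i => pow_pos (hp i).pos _
  have hspos : ∀ i, 0 < s i := fun i => Finset.prod_pos (fun j _ => hApos j)
  have hNsplit : ∀ i, N = A i * s i := by
    intro i
    rw [hN, hs]
    exact (Finset.mul_prod_erase _ _ (Finset.mem_univ i)).symm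
  have hA2 : ∀ i, 2 ≤ A i :=
    fun i => le_trans (hp i).two_le (Nat.le_self_pow (hn i).ne' _)
  have hpne : ∀ i j, i ≠ j → p i ≠ p j := fun i j hij => fun h => hij (hmono.injective h)
  have hAcop : ∀ i j, i ≠ j → Nat.Coprime (A i) (A j) := by
    intro i j hij
    exact Nat.Coprime.pow _ _ ((Nat.coprime_primes (hp i) (hp j)).mpr (hpne i j hij))
  have hpnds : ∀ i, ¬ p i ∣ s i := by
    intro i hdvd
    obtain ⟨j, hj, hdd⟩ := ((hp i).prime.dvd_finset_prod_iff _).mp hdvd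
    have hji : j ≠ i := (Finset.mem_erase.mp hj).1
    have hpp : p i = p j :=
      (Nat.prime_dvd_prime_iff_eq (hp i) (hp j)).mp ((hp i).dvd_of_dvd_pow hdd)
    exact hji (hmono.injective hpp).symm
  -- p 0 = 2, n 0 = 1
  have hp0 : p 0 = 2 := by
    have h2N : 2 ∣ N := by omega
    obtain ⟨j, -, hdd⟩ := (Nat.prime_two.prime.dvd_finset_prod_iff _).mp (hN ▸ h2N)
    have hj2 : p j = 2 :=
      ((Nat.prime_dvd_prime_iff_eq Nat.prime_two (hp j)).mp
        (Nat.prime_two.dvd_of_dvd_pow hdd)).symm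
    rcases eq_or_ne j 0 with rfl | hj0
    · exact hj2
    · exfalso
      have hlt : p 0 < p j := hmono (by
        refine Fin.lt_def.mpr ?_
        simpa using Nat.pos_of_ne_zero (fun h => hj0 (Fin.ext h)))
      have := (hp 0).two_le
      omega
  have hn0 : n 0 = 1 := by
    have h1 := hn 0
    by_contra h
    have h2 : 2 ≤ n 0 := by omega
    have h4 : 4 ∣ A 0 := by
      have hpd : (2:ℕ)^2 ∣ 2 ^ n 0 := pow_dvd_pow 2 h2
      simpa [hA, hp0] using hpd
    have : 4 ∣ N := h4.trans ⟨s 0, hNsplit 0⟩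
    omega
  have hA0 : A 0 = 2 := by simp [hA, hp0, hn0]
  -- indexing of odd primes
  have hem : ∀ i : Fin (a-1), (i.1+1) < a := fun i => by have := i.isLt; omega
  set em : Fin (a-1) → Fin a := fun i => ⟨i.1+1, hem i⟩ with hemdef
  have hem0 : ∀ i, em i ≠ 0 := by
    intro i h
    have : (em i).1 = (0 : Fin a).1 := by rw [h]
    simp [hemdef] at this
  have heminj : Function.Injective em := by
    intro i j h
    have : (em i).1 = (em j).1 := by rw [h]
    simp only [hemdef] at this
    exact Fin.ext (by omega)
  have hemsurj : ∀ jj : Fin a, jj ≠ 0 → ∃ i : Fin (a-1), em i = jj := by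
    intro jj hjj
    have h1 : jj.1 ≠ 0 := fun h => hjj (Fin.ext (by simpa using h))
    exact ⟨⟨jj.1 - 1, by have := jj.isLt; omega⟩, Fin.ext (by show jj.1 - 1 + 1 = jj.1; omega)⟩
  have hp_ne0 : ∀ jj : Fin a, jj ≠ 0 → 2 < p jj := by
    intro jj hjj
    have : p 0 < p jj := hmono (by
      refine Fin.lt_def.mpr ?_
      simpa using Nat.pos_of_ne_zero (fun h => hjj (Fin.ext h)))
    omega
  -- val facts
  have hval0 : ∀ x : ZMod N, x ≠ 0 → x.val ≠ 0 :=
    fun x hx h => hx ((ZMod.val_eq_zero x).mp h)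
  have hvallt : ∀ x : ZMod N, x.val < N := fun x => ZMod.val_lt x
  have hvalinj : ∀ x y : ZMod N, x.val = y.val → x = y := by
    intro x y h
    rw [← ZMod.natCast_zmod_val x, ← ZMod.natCast_zmod_val y, h]
  have hdpos : ∀ x : ZMod N, (0:ℝ) < ((x.val : ℝ) + 1) / ((N:ℝ) + 2) := by
    intro x; positivity
  have hdlt : ∀ x : ZMod N, ((x.val : ℝ) + 1) / ((N:ℝ) + 2) < 1 := by
    intro x
    rw [div_lt_one (by positivity)]
    have := hvallt x
    have : (x.val : ℝ) < N := by exact_mod_cast this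
    linarith
  have hdne : ∀ x y : ZMod N, x ≠ y →
      ((x.val : ℝ) + 1) / ((N:ℝ) + 2) ≠ ((y.val : ℝ) + 1) / ((N:ℝ) + 2) := by
    intro x y hxy h
    apply hxy
    apply hvalinj
    have hc : (0:ℝ) < ((N:ℝ)+2) := by positivity
    have h2 : ((x.val : ℝ)) = ((y.val : ℝ)) := by
      have h3 := congrArg (fun t : ℝ => t * ((N:ℝ)+2)) h
      simp only [div_mul_cancel₀ _ hc.ne'] at h3
      linarith
    exact Nat.cast_inj.mp h2
  have hmul0 : ∀ x y : ZMod N, (x * y = 0 ↔ N ∣ x.val * y.val) := by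
    intro x y
    have hxy : x * y = ((x.val * y.val : ℕ) : ZMod N) := by
      rw [Nat.cast_mul, ZMod.natCast_zmod_val, ZMod.natCast_zmod_val]
    rw [hxy, ZMod.natCast_eq_zero_iff]
  have hNdvd_iff : ∀ z : ℕ, z ≠ 0 → (N ∣ z ↔ ∀ j, n j ≤ z.factorization (p j)) := by
    intro z hz
    constructor
    · intro h j
      have hAj : A j ∣ z := dvd_trans ⟨s j, hNsplit j⟩ h
      exact (Nat.Prime.pow_dvd_iff_le_factorization (hp j) hz).mp hAj
    · intro h
      have hprod : (∏ j, A j) ∣ z :=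
        nat_prod_dvd Finset.univ (fun i _ j _ hij => hAcop i j hij)
          (fun j _ => (Nat.Prime.pow_dvd_iff_le_factorization (hp j) hz).mpr (h j))
      rwa [← hN] at hprod
  have hadj : ∀ u v : {x : ZMod N // x ≠ 0 ∧ ∃ y : ZMod N, y ≠ 0 ∧ x * y = 0},
      (zeroDivisorGraph (ZMod N)).Adj u v ↔
        (u ≠ v ∧ ∀ j, n j ≤ (u.1.val).factorization (p j) + (v.1.val).factorization (p j)) := by
    intro u v
    have hu0 := hval0 u.1 u.2.1
    have hv0 := hval0 v.1 v.2.1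
    rw [zeroDivisorGraph, SimpleGraph.fromRel_adj]
    have key : ((u.1 : ZMod N) * v.1 = 0) ↔
        ∀ j, n j ≤ (u.1.val).factorization (p j) + (v.1.val).factorization (p j) := by
      rw [hmul0, hNdvd_iff _ (Nat.mul_ne_zero hu0 hv0)]
      refine forall_congr' fun j => ?_
      rw [Nat.factorization_mul hu0 hv0]
      rfl
    constructor
    · rintro ⟨hne, h | h⟩
      · exact ⟨hne, key.mp h⟩
      · exact ⟨hne, key.mp (by rwa [mul_comm] at h)⟩
    · rintro ⟨hne, h⟩
      exact ⟨hne, Or.inl (key.mpr h)⟩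
  have hoddiff : ∀ x : ZMod N, x ≠ 0 → (x.val % 2 = 0 ↔ 1 ≤ (x.val).factorization 2) := by
    intro x hx
    rw [← Nat.Prime.dvd_iff_one_le_factorization Nat.prime_two (hval0 x hx)]
    omega
  -- UPPER BOUND: explicit interval representations
  have hU : (a-1) ∈ {d : ℕ | ∃ I : Fin d →
      SimpleGraph {x : ZMod N // x ≠ 0 ∧ ∃ y : ZMod N, y ≠ 0 ∧ x * y = 0},
      (∀ i, IsIntervalGraph (I i)) ∧
      ∀ u v, (zeroDivisorGraph (ZMod N)).Adj u v ↔ (u ≠ v ∧ ∀ i, (I i).Adj u v)} := by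
    refine ⟨fun i => coordGraph N (p (em i)) (n (em i)),
      fun i => coordGraph_isInterval _ _ _, ?_⟩
    intro u v
    rw [hadj u v]
    have hu0 := hval0 u.1 u.2.1
    have hv0 := hval0 v.1 v.2.1
    constructor
    · rintro ⟨hne, hall⟩
      refine ⟨hne, fun i => ?_⟩
      rw [coordGraph_adj _ _ _ _ _ hne]
      have hpar : u.1.val % 2 = 0 ∨ v.1.val % 2 = 0 := by
        have h0 := hall 0
        rw [hn0, hp0] at h0
        rcases Nat.eq_zero_or_pos ((u.1.val).factorization 2) with h | h
        · exact Or.inr ((hoddiff v.1 v.2.1).mpr (by omega))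
        · exact Or.inl ((hoddiff u.1 u.2.1).mpr h)
      simp only [coordLo, coordHi]
      exact zmeet_of_ok (hn (em i)) (hsmall (em i) (by have := hp_ne0 (em i) (hem0 i); omega))
        (hdpos u.1) (hdlt u.1) (hdpos v.1) (hdlt v.1) (hall (em i)) hpar
    · rintro ⟨hne, hallI⟩
      refine ⟨hne, ?_⟩
      have hdd : ((u.1.val : ℝ) + 1) / ((N:ℝ) + 2) ≠ ((v.1.val : ℝ) + 1) / ((N:ℝ) + 2) :=
        hdne u.1 v.1 (fun h => hne (Subtype.ext h))
      have hmeet : ∀ i : Fin (a-1),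
          (Set.Icc (zlo (n (em i)) ((u.1.val).factorization (p (em i))) (u.1.val % 2)
              (((u.1.val : ℝ) + 1) / ((N:ℝ) + 2)))
            (zhi (n (em i)) ((u.1.val).factorization (p (em i))) (u.1.val % 2)
              (((u.1.val : ℝ) + 1) / ((N:ℝ) + 2))) ∩
           Set.Icc (zlo (n (em i)) ((v.1.val).factorization (p (em i))) (v.1.val % 2)
              (((v.1.val : ℝ) + 1) / ((N:ℝ) + 2)))
            (zhi (n (em i)) ((v.1.val).factorization (p (em i))) (v.1.val % 2)
              (((v.1.val : ℝ) + 1) / ((N:ℝ) + 2)))).Nonempty := by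
        intro i
        have := (coordGraph_adj _ _ _ _ _ hne).mp (hallI i)
        simpa only [coordLo, coordHi] using this
      by_contra hnot
      push_neg at hnot
      obtain ⟨j, hj⟩ := hnot
      rcases eq_or_ne j 0 with rfl | hj0
      · -- parity failure: both values odd
        rw [hn0, hp0] at hj
        have hou : u.1.val % 2 ≠ 0 := by
          intro h
          have := (hoddiff u.1 u.2.1).mp h
          omega
        have hov : v.1.val % 2 ≠ 0 := by
          intro h
          have := (hoddiff v.1 v.2.1).mp h
          omega
        by_cases hex : ∃ i : Fin (a-1), (u.1.val).factorization (p (em i)) < n (em i) ∨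
            (v.1.val).factorization (p (em i)) < n (em i)
        · obtain ⟨i, hi⟩ := hex
          exact zmeet_not_odd (hdpos u.1) (hdlt u.1) (hdpos v.1) (hdlt v.1)
            hou hov hi hdd (hmeet i)
        · push_neg at hex
          have hmm : ∀ x : ZMod N, x ≠ 0 →
              (∀ i : Fin (a-1), n (em i) ≤ (x.val).factorization (p (em i))) →
              x.val = s 0 := by
            intro x hx hall2
            have hdv : s 0 ∣ x.val := by
              rw [hs]
              apply nat_prod_dvd
              · exact fun i _ j _ hij => hAcop i j hij
              · intro i hi
                have hi0 : i ≠ 0 := (Finset.mem_erase.mp hi).1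
                obtain ⟨i', hi'⟩ := hemsurj i hi0
                refine (Nat.Prime.pow_dvd_iff_le_factorization (hp i) (hval0 x hx)).mpr ?_
                rw [← hi']
                exact hall2 i'
            obtain ⟨k, hk⟩ := hdv
            have hxlt : x.val < 2 * s 0 := by
              have h1 := hvallt x
              have h2 : N = 2 * s 0 := by rw [hNsplit 0, hA0]
              omega
            have hk0 : k ≠ 0 := by
              rintro rfl
              rw [Nat.mul_zero] at hk
              exact hval0 x hx hk
            have hk1 : k = 1 := by
              by_contra hkk
              have h2k : 2 ≤ k := by omega
              have : 2 * s 0 ≤ s 0 * k := by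
                calc 2 * s 0 = s 0 * 2 := by ring
                _ ≤ s 0 * k := Nat.mul_le_mul_left _ h2k
              omega
            rw [hk, hk1, Nat.mul_one]
          have hequ : u.1.val = s 0 := hmm u.1 u.2.1 (fun i => (hex i).1)
          have heqv : v.1.val = s 0 := hmm v.1 v.2.1 (fun i => (hex i).2)
          exact hne (Subtype.ext (hvalinj _ _ (hequ.trans heqv.symm)))
      · obtain ⟨i, hi⟩ := hemsurj j hj0
        subst hi
        exact zmeet_not_fail (hsmall (em i) (by have := hp_ne0 (em i) (hem0 i); omega))
          (hdpos u.1) (hdlt u.1) (hdpos v.1) (hdlt v.1) hj hdd (hmeet i)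
  -- LOWER BOUND
  have hL : ∀ d ∈ {d : ℕ | ∃ I : Fin d →
      SimpleGraph {x : ZMod N // x ≠ 0 ∧ ∃ y : ZMod N, y ≠ 0 ∧ x * y = 0},
      (∀ i, IsIntervalGraph (I i)) ∧
      ∀ u v, (zeroDivisorGraph (ZMod N)).Adj u v ↔ (u ≠ v ∧ ∀ i, (I i).Adj u v)},
      a - 1 ≤ d := by
    rintro d ⟨I, hInt, hIff⟩
    -- general size facts
    have h2s : ∀ jj : Fin a, 2 ≤ s jj := by
      intro jj
      rcases eq_or_ne jj 0 with rfl | hjj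
      · have hmem : (⟨1, by omega⟩ : Fin a) ∈ Finset.univ.erase (0 : Fin a) := by
          refine Finset.mem_erase.mpr ⟨?_, Finset.mem_univ _⟩
          intro h
          have : (1:ℕ) = (0:ℕ) := by simpa [Fin.ext_iff] using h
          omega
        have hdvd : A ⟨1, by omega⟩ ∣ s 0 := by
          rw [hs]; exact Finset.dvd_prod_of_mem _ hmem
        exact le_trans (hA2 _) (Nat.le_of_dvd (hspos 0) hdvd)
      · have hmem : (0 : Fin a) ∈ Finset.univ.erase jj :=
          Finset.mem_erase.mpr ⟨fun h => hjj h.symm, Finset.mem_univ _⟩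
        have hdvd : A 0 ∣ s jj := by
          rw [hs]; exact Finset.dvd_prod_of_mem _ hmem
        exact le_trans (by omega) (Nat.le_of_dvd (hspos jj) (hA0 ▸ hdvd))
    have hAltN : ∀ jj : Fin a, A jj < N := by
      intro jj
      have h1 : A jj * 1 < A jj * s jj :=
        (Nat.mul_lt_mul_left (hApos jj)).mpr (by have := h2s jj; omega)
      rw [Nat.mul_one] at h1
      rw [hNsplit jj]
      exact h1
    have hslt : ∀ i : Fin (a-1), 2 * s (em i) < N := by
      intro i
      have h3 : 3 ≤ A (em i) := by
        have h2 := hp_ne0 (em i) (hem0 i)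
        have hle : p (em i) ≤ A (em i) := Nat.le_self_pow (hn (em i)).ne' _
        omega
      have h4 : 2 * s (em i) < A (em i) * s (em i) :=
        (Nat.mul_lt_mul_right (hspos (em i))).mpr (by omega)
      rw [hNsplit (em i)]
      exact h4
    have hslt1 : ∀ i : Fin (a-1), s (em i) < N := fun i => by have := hslt i; have := hspos (em i); omega
    have hx0 : ∀ z : ℕ, z ≠ 0 → z < N → ((z : ZMod N) ≠ 0) := by
      intro z hz hzN h
      rw [ZMod.natCast_eq_zero_iff] at h
      exact hz (Nat.eq_zero_of_dvd_of_lt h hzN)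
    -- the vertex pairs
    have hvert : ∀ (i : Fin (a-1)) (z : ℕ), z ≠ 0 → z < N → s (em i) ∣ z →
        ((z : ZMod N) ≠ 0 ∧ ∃ y : ZMod N, y ≠ 0 ∧ (z : ZMod N) * y = 0) := by
      intro i z hz hzN hdv
      refine ⟨hx0 z hz hzN, (A (em i) : ZMod N),
        hx0 (A (em i)) (by have := hApos (em i); omega) (hAltN (em i)), ?_⟩
      obtain ⟨k, hk⟩ := hdv
      have hcast : ((z * A (em i) : ℕ) : ZMod N) = 0 := by
        rw [ZMod.natCast_eq_zero_iff]
        exact ⟨k, by rw [hk, hNsplit (em i)]; ring⟩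
      rw [Nat.cast_mul] at hcast
      exact hcast
    set ui : Fin (a-1) → {x : ZMod N // x ≠ 0 ∧ ∃ y : ZMod N, y ≠ 0 ∧ x * y = 0} :=
      fun i => ⟨(s (em i) : ZMod N),
        hvert i (s (em i)) (hspos (em i)).ne' (hslt1 i) dvd_rfl⟩ with huidef
    set wi : Fin (a-1) → {x : ZMod N // x ≠ 0 ∧ ∃ y : ZMod N, y ≠ 0 ∧ x * y = 0} :=
      fun i => ⟨((2 * s (em i) : ℕ) : ZMod N),
        hvert i (2 * s (em i)) (by have := hspos (em i); omega) (hslt i) (Dvd.intro 2 (by ring))⟩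
        with hwidef
    have hui : ∀ i, (ui i).1.val = s (em i) := fun i => ZMod.val_natCast_of_lt (hslt1 i)
    have hwi : ∀ i, (wi i).1.val = 2 * s (em i) := fun i => ZMod.val_natCast_of_lt (hslt i)
    -- distinctness facts
    have hvne : ∀ (x y : {x : ZMod N // x ≠ 0 ∧ ∃ y : ZMod N, y ≠ 0 ∧ x * y = 0}),
        x.1.val ≠ y.1.val → x ≠ y := by
      intro x y h hxy
      exact h (by rw [hxy])
    have hpdvd_si : ∀ i j : Fin (a-1), i ≠ j → p (em j) ∣ s (em i) := by
      intro i j hij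
      have hmem : em j ∈ Finset.univ.erase (em i) :=
        Finset.mem_erase.mpr ⟨fun h => hij (heminj h).symm, Finset.mem_univ _⟩
      have hAj : A (em j) ∣ s (em i) := by rw [hs]; exact Finset.dvd_prod_of_mem _ hmem
      exact dvd_trans (dvd_pow_self (p (em j)) (hn (em j)).ne') hAj
    have hpnd2s : ∀ j : Fin (a-1), ¬ p (em j) ∣ 2 * s (em j) := by
      intro j hdv
      rcases (Nat.Prime.dvd_mul (hp (em j))).mp hdv with h | h
      · have h1 := Nat.le_of_dvd (by omega) h
        have h2 := hp_ne0 (em j) (hem0 j)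
        omega
      · exact hpnds (em j) h
    have hvalne : ∀ i j : Fin (a-1), i ≠ j → ∀ (c1 c2 : ℕ), c1 = 1 ∨ c1 = 2 → c2 = 1 ∨ c2 = 2 →
        c1 * s (em i) ≠ c2 * s (em j) := by
      intro i j hij c1 c2 hc1 hc2 heq
      have hdvd1 : p (em j) ∣ c1 * s (em i) := (hpdvd_si i j hij).mul_left c1
      rw [heq] at hdvd1
      apply hpnd2s j
      rcases (Nat.Prime.dvd_mul (hp (em j))).mp hdvd1 with h | h
      · have h1 := Nat.le_of_dvd (by omega) h
        have h2 := hp_ne0 (em j) (hem0 j)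
        omega
      · exact h.mul_left 2
    -- cross divisibility
    have hcrossdvd : ∀ i j : Fin (a-1), i ≠ j → N ∣ s (em i) * s (em j) := by
      intro i j hij
      have hmem : em j ∈ Finset.univ.erase (em i) :=
        Finset.mem_erase.mpr ⟨fun h => hij (heminj h).symm, Finset.mem_univ _⟩
      have hsi : s (em i) = A (em j) * ∏ k ∈ (Finset.univ.erase (em i)).erase (em j), A k := by
        rw [hs]
        exact (Finset.mul_prod_erase _ _ hmem).symm
      refine ⟨(∏ k ∈ (Finset.univ.erase (em i)).erase (em j), A k), ?_⟩
      rw [hsi, hNsplit (em j)]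
      ring
    have hadj2 : ∀ (x y : {x : ZMod N // x ≠ 0 ∧ ∃ y : ZMod N, y ≠ 0 ∧ x * y = 0}),
        x ≠ y → N ∣ x.1.val * y.1.val → (zeroDivisorGraph (ZMod N)).Adj x y := by
      intro x y hnexy hdv
      rw [zeroDivisorGraph, SimpleGraph.fromRel_adj]
      exact ⟨hnexy, Or.inl ((hmul0 _ _).mpr hdv)⟩
    have hcdvd : ∀ i j : Fin (a-1), i ≠ j → ∀ c1 c2 : ℕ,
        N ∣ (c1 * s (em i)) * (c2 * s (em j)) := by
      intro i j hij c1 c2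
      have h := (hcrossdvd i j hij).mul_left (c1 * c2)
      rwa [show (c1 * c2) * (s (em i) * s (em j)) = (c1 * s (em i)) * (c2 * s (em j)) by ring] at h
    -- Γ-nonadjacency within a pair
    have hnadj : ∀ i, ¬ (zeroDivisorGraph (ZMod N)).Adj (ui i) (wi i) := by
      intro i hadj'
      have hnd : ¬ N ∣ s (em i) * (2 * s (em i)) := by
        intro h
        have h' : A (em i) * s (em i) ∣ (2 * s (em i)) * s (em i) := by
          rw [← hNsplit (em i)]
          rwa [show s (em i) * (2 * s (em i)) = (2 * s (em i)) * s (em i) by ring] at h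
        have h2 : A (em i) ∣ 2 * s (em i) :=
          (Nat.mul_dvd_mul_iff_right (hspos (em i))).mp h'
        exact hpnd2s i (dvd_trans (dvd_pow_self _ (hn _).ne') h2)
      rw [zeroDivisorGraph, SimpleGraph.fromRel_adj] at hadj'
      obtain ⟨-, h | h⟩ := hadj'
      · rw [hmul0, hui, hwi] at h
        exact hnd h
      · rw [hmul0, hwi, hui] at h
        exact hnd (by rwa [show s (em i) * (2 * s (em i)) = (2 * s (em i)) * s (em i) by ring])
    have hneuv : ∀ i, ui i ≠ wi i := by
      intro i
      apply hvne
      rw [hui, hwi]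
      have := hspos (em i)
      omega
    -- cross adjacency between different pairs
    have hcadj : ∀ i j : Fin (a-1), i ≠ j → ∀ c1 c2 : ℕ, (hc1 : c1 = 1 ∨ c1 = 2) →
        (hc2 : c2 = 1 ∨ c2 = 2) → True := fun _ _ _ _ _ _ _ => trivial
    have cross : ∀ i j : Fin (a-1), i ≠ j →
        (zeroDivisorGraph (ZMod N)).Adj (ui i) (ui j) ∧
        (zeroDivisorGraph (ZMod N)).Adj (ui i) (wi j) ∧
        (zeroDivisorGraph (ZMod N)).Adj (wi i) (ui j) ∧
        (zeroDivisorGraph (ZMod N)).Adj (wi i) (wi j) := by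
      intro i j hij
      refine ⟨?_, ?_, ?_, ?_⟩
      · refine hadj2 _ _ (hvne _ _ ?_) ?_
        · rw [hui, hui]
          exact fun h => hvalne i j hij 1 1 (Or.inl rfl) (Or.inl rfl) (by simpa using h)
        · rw [hui, hui]
          have := hcdvd i j hij 1 1
          simpa using this
      · refine hadj2 _ _ (hvne _ _ ?_) ?_
        · rw [hui, hwi]
          exact fun h => hvalne i j hij 1 2 (Or.inl rfl) (Or.inr rfl) (by simpa using h)
        · rw [hui, hwi]
          have := hcdvd i j hij 1 2
          simpa using this
      · refine hadj2 _ _ (hvne _ _ ?_) ?_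
        · rw [hwi, hui]
          exact fun h => hvalne i j hij 2 1 (Or.inr rfl) (Or.inl rfl) (by simpa using h)
        · rw [hwi, hui]
          have := hcdvd i j hij 2 1
          simpa using this
      · refine hadj2 _ _ (hvne _ _ ?_) ?_
        · rw [hwi, hwi]
          exact fun h => hvalne i j hij 2 2 (Or.inr rfl) (Or.inr rfl) h
        · rw [hwi, hwi]
          exact hcdvd i j hij 2 2
    -- choose a separating coordinate for each pair
    have hex : ∀ i : Fin (a-1), ∃ k : Fin d, ¬ (I k).Adj (ui i) (wi i) := by
      intro i
      by_contra hc
      push_neg at hc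
      exact hnadj i ((hIff _ _).mpr ⟨hneuv i, hc⟩)
    choose F hF using hex
    have hFinj : Function.Injective F := by
      intro i j hij'
      by_contra hij
      obtain ⟨lo, hi, hrep⟩ := hInt (F i)
      have d12 : ¬ (Set.Icc (lo (ui i)) (hi (ui i)) ∩
          Set.Icc (lo (wi i)) (hi (wi i))).Nonempty :=
        fun h => hF i ((hrep _ _ (hneuv i)).mpr h)
      have d34 : ¬ (Set.Icc (lo (ui j)) (hi (ui j)) ∩
          Set.Icc (lo (wi j)) (hi (wi j))).Nonempty := by
        intro h
        apply hF j
        rw [← hij']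
        exact (hrep _ _ (hneuv j)).mpr h
      obtain ⟨c1, c2, c3, c4⟩ := cross i j hij
      have m13 := ((hIff _ _).mp c1).2 (F i)
      have m14 := ((hIff _ _).mp c2).2 (F i)
      have m23 := ((hIff _ _).mp c3).2 (F i)
      have m24 := ((hIff _ _).mp c4).2 (F i)
      exact cross_contra (lo (ui i)) (hi (ui i)) (lo (wi i)) (hi (wi i))
        (lo (ui j)) (hi (ui j)) (lo (wi j)) (hi (wi j)) d12 d34
        ((hrep _ _ ((hIff _ _).mp c1).1).mp m13)
        ((hrep _ _ ((hIff _ _).mp c2).1).mp m14)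
        ((hrep _ _ ((hIff _ _).mp c3).1).mp m23)
        ((hrep _ _ ((hIff _ _).mp c4).1).mp m24)
    have hcard := Fintype.card_le_of_injective F hFinj
    simpa using hcard
  -- CONCLUSION
  unfold boxicity
  exact le_antisymm (Nat.sInf_le hU) (le_csInf ⟨_, hU⟩ hL)
end

section
/- Let N = p_1^{n_1} ··· p_a^{n_a} with a ≥ 2, and suppose it is not the case that (N ≡ 2 mod 4 and n_i ≤ 2 for all i with p_i odd). Then box(Γ(Z_N)) = a. -/
-- helper: p^n does not divide p^t * s when p prime, p ∤ s, t < n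
lemma not_pow_dvd {q s t nn : ℕ} (hq : q.Prime) (hs : ¬ q ∣ s) (ht : t < nn) :
    ¬ q ^ nn ∣ q ^ t * s := by
  intro h
  have h1 : q ^ (t + 1) ∣ q ^ t * s := (pow_dvd_pow q (by omega)).trans h
  rw [pow_succ] at h1
  exact hs ((Nat.mul_dvd_mul_iff_left (pow_pos hq.pos t)).mp h1)

lemma not_dvd_of_prime_not_dvd {q s nn : ℕ} (hq : q.Prime) (hs : ¬ q ∣ s) (hnn : 0 < nn) :
    ¬ q ^ nn ∣ s := by
  have := not_pow_dvd (t := 0) hq hs hnn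
  simpa using this

-- product of pairwise coprime divisors divides
lemma prod_dvd_of_pairwise_coprime {ι : Type*} [DecidableEq ι] (s : Finset ι) (f : ι → ℕ) (m : ℕ)
    (hcop : ∀ i ∈ s, ∀ j ∈ s, i ≠ j → Nat.Coprime (f i) (f j))
    (hdvd : ∀ i ∈ s, f i ∣ m) : (∏ i ∈ s, f i) ∣ m := by
  induction s using Finset.induction_on with
  | empty => simpa using one_dvd m
  | insert _ _ hx ih =>
    rename_i x t
    rw [Finset.prod_insert hx]
    apply Nat.Coprime.mul_dvd_of_dvd_of_dvd
    · exact Nat.Coprime.prod_right fun j hj =>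
        hcop x (Finset.mem_insert_self x t) j (Finset.mem_insert_of_mem hj)
          (by rintro rfl; exact hx hj)
    · exact hdvd x (Finset.mem_insert_self x t)
    · exact ih (fun i hi j hj hij => hcop i (Finset.mem_insert_of_mem hi) j
        (Finset.mem_insert_of_mem hj) hij) (fun i hi => hdvd i (Finset.mem_insert_of_mem hi))

-- threshold criterion for prime power dividing a product
lemma dvd_iff_threshold {q nn x y : ℕ} (hq : q.Prime) (hx : x ≠ 0) (hy : y ≠ 0) :
    q ^ nn ∣ x * y ↔ nn ≤ min (x.factorization q) nn + min (y.factorization q) nn := by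
  rw [hq.pow_dvd_iff_le_factorization (mul_ne_zero hx hy), Nat.factorization_mul hx hy]
  simp only [Finsupp.add_apply]
  omega


lemma threshold_interval {V : Type*} (w : V → ℕ) (S : ℕ) (ε : V → ℝ)
    (hinj : Function.Injective ε) (h0 : ∀ v, 0 ≤ ε v) (h1 : ∀ v, ε v < 1/2) :
    ∃ A B : V → ℝ, ∀ u v : V, u ≠ v →
      ((S ≤ w u + w v) ↔ (Set.Icc (A u) (B u) ∩ Set.Icc (A v) (B v)).Nonempty) := by
  classical
  refine ⟨fun v => if S ≤ 2 * w v then (S : ℝ) - w v else (w v : ℝ) + ε v,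
          fun v => if S ≤ 2 * w v then (w v : ℝ) else (w v : ℝ) + ε v, ?_⟩
  intro u v huv
  rw [Set.Icc_inter_Icc, Set.nonempty_Icc, max_le_iff, le_min_iff, le_min_iff]
  by_cases hu : S ≤ 2 * w u <;> by_cases hv : S ≤ 2 * w v <;>
    simp only [hu, hv, if_true, if_false, if_pos, if_neg]
  · -- big big
    constructor
    · intro h
      have h' : (S : ℝ) ≤ (w u : ℝ) + w v := by exact_mod_cast h
      have hu' : (S : ℝ) ≤ 2 * w u := by exact_mod_cast hu
      have hv' : (S : ℝ) ≤ 2 * w v := by exact_mod_cast hv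
      constructor <;> constructor <;> linarith
    · rintro ⟨⟨h1', h2'⟩, _⟩
      have : (S : ℝ) ≤ (w u : ℝ) + (w v : ℝ) := by linarith
      exact_mod_cast this
  · -- u big, v small
    push_neg at hv
    have hv' : (2 * w v : ℝ) < S := by exact_mod_cast hv
    have hu' : (S : ℝ) ≤ 2 * w u := by exact_mod_cast hu
    constructor
    · intro h
      have h' : (S : ℝ) ≤ (w u : ℝ) + w v := by exact_mod_cast h
      have hwvu : (w v : ℝ) + 1 ≤ w u := by
        have : w v < w u := by omega
        have : (w v : ℝ) < w u := by exact_mod_cast this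
        have h2 : w v + 1 ≤ w u := by omega
        exact_mod_cast h2
      have hε0 := h0 v; have hε1 := h1 v
      refine ⟨⟨by linarith, by linarith⟩, by linarith, by linarith⟩
    · rintro ⟨⟨h1', h2'⟩, h3', h4'⟩
      have hε1 := h1 v
      have : (S : ℝ) < (w u : ℝ) + w v + 1 := by linarith
      have h5 : (S : ℝ) < ((w u + w v + 1 : ℕ) : ℝ) := by push_cast; linarith
      have := Nat.cast_lt.mp h5
      omega
  · -- u small, v big
    push_neg at hu
    have hu' : (2 * w u : ℝ) < S := by exact_mod_cast hu
    have hv' : (S : ℝ) ≤ 2 * w v := by exact_mod_cast hv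
    constructor
    · intro h
      have h' : (S : ℝ) ≤ (w u : ℝ) + w v := by exact_mod_cast h
      have hwvu : (w u : ℝ) + 1 ≤ w v := by
        have h2 : w u + 1 ≤ w v := by omega
        exact_mod_cast h2
      have hε0 := h0 u; have hε1 := h1 u
      refine ⟨⟨by linarith, by linarith⟩, by linarith, by linarith⟩
    · rintro ⟨⟨h1', h2'⟩, h3', h4'⟩
      have hε1 := h1 u
      have : (S : ℝ) < (w u : ℝ) + w v + 1 := by linarith
      have h5 : (S : ℝ) < ((w u + w v + 1 : ℕ) : ℝ) := by push_cast; linarith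
      have := Nat.cast_lt.mp h5
      omega
  · -- small small
    push_neg at hu hv
    constructor
    · intro h; omega
    · rintro ⟨⟨h1', h2'⟩, h3', h4'⟩
      exfalso
      have heq : (w u : ℝ) + ε u = (w v : ℝ) + ε v := by linarith
      have hεu0 := h0 u; have hεu1 := h1 u; have hεv0 := h0 v; have hεv1 := h1 v
      rcases lt_trichotomy (w u) (w v) with hlt | heq' | hgt
      · have : (w u : ℝ) + 1 ≤ w v := by exact_mod_cast Nat.succ_le_of_lt hlt
        linarith
      · rw [heq'] at heq
        exact huv (hinj (by linarith))
      · have : (w v : ℝ) + 1 ≤ w u := by exact_mod_cast Nat.succ_le_of_lt hgt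
        linarith

lemma four_point_aux {V : Type*} (A B : V → ℝ) (x1 y1 x2 y2 : V)
    (h12 : (Set.Icc (A x1) (B x1) ∩ Set.Icc (A x2) (B x2)).Nonempty)
    (h12' : (Set.Icc (A y1) (B y1) ∩ Set.Icc (A x2) (B x2)).Nonempty)
    (h13 : (Set.Icc (A x1) (B x1) ∩ Set.Icc (A y2) (B y2)).Nonempty)
    (h13' : (Set.Icc (A y1) (B y1) ∩ Set.Icc (A y2) (B y2)).Nonempty)
    (hgap : B x1 < A y1) :
    (Set.Icc (A x2) (B x2) ∩ Set.Icc (A y2) (B y2)).Nonempty := by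
  obtain ⟨s, ⟨hs1, hs2⟩, hs3, hs4⟩ := h12
  obtain ⟨t, ⟨ht1, ht2⟩, ht3, ht4⟩ := h12'
  obtain ⟨s', ⟨hs1', hs2'⟩, hs3', hs4'⟩ := h13
  obtain ⟨t', ⟨ht1', ht2'⟩, ht3', ht4'⟩ := h13'
  exact ⟨B x1, ⟨by linarith, by linarith⟩, by linarith, by linarith⟩

lemma four_point {V : Type*} {H : SimpleGraph V} (hH : IsIntervalGraph H)
    (x1 y1 x2 y2 : V)
    (ne1 : x1 ≠ y1) (ne2 : x2 ≠ y2)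
    (hn1 : ¬ H.Adj x1 y1) (hn2 : ¬ H.Adj x2 y2)
    (ha1 : H.Adj x1 x2) (ha2 : H.Adj x1 y2) (ha3 : H.Adj y1 x2) (ha4 : H.Adj y1 y2) :
    False := by
  obtain ⟨A, B, hAB⟩ := hH
  have n12 : x1 ≠ x2 := fun h => H.irrefl (h ▸ ha1)
  have n13 : x1 ≠ y2 := fun h => H.irrefl (h ▸ ha2)
  have n22 : y1 ≠ x2 := fun h => H.irrefl (h ▸ ha3)
  have n23 : y1 ≠ y2 := fun h => H.irrefl (h ▸ ha4)
  have i1 := (hAB _ _ n12).mp ha1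
  have i2 := (hAB _ _ n13).mp ha2
  have i3 := (hAB _ _ n22).mp ha3
  have i4 := (hAB _ _ n23).mp ha4
  have e1 : ¬ (Set.Icc (A x1) (B x1) ∩ Set.Icc (A y1) (B y1)).Nonempty :=
    fun h => hn1 ((hAB _ _ ne1).mpr h)
  have e2 : ¬ (Set.Icc (A x2) (B x2) ∩ Set.Icc (A y2) (B y2)).Nonempty :=
    fun h => hn2 ((hAB _ _ ne2).mpr h)
  have hx1 : A x1 ≤ B x1 := by
    obtain ⟨s, ⟨h1, h2⟩, -⟩ := i1; exact h1.trans h2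
  have hy1 : A y1 ≤ B y1 := by
    obtain ⟨s, ⟨h1, h2⟩, -⟩ := i3; exact h1.trans h2
  have hgap : B x1 < A y1 ∨ B y1 < A x1 := by
    by_contra hc
    push_neg at hc
    exact e1 ⟨max (A x1) (A y1), ⟨le_max_left _ _, max_le hx1 hc.1⟩,
      le_max_right _ _, max_le hc.2 hy1⟩
  rcases hgap with hgap | hgap
  · exact e2 (four_point_aux A B x1 y1 x2 y2 i1 i3 i2 i4 hgap)
  · exact e2 (four_point_aux A B y1 x1 x2 y2 i3 i1 i4 i2 hgap)

lemma pairs_le {V : Type*} {aa d : ℕ} (G : SimpleGraph V) (I : Fin d → SimpleGraph V)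
    (hint : ∀ i, IsIntervalGraph (I i))
    (hcov : ∀ u v, G.Adj u v ↔ (u ≠ v ∧ ∀ i, (I i).Adj u v))
    (X Y : Fin aa → V)
    (hne : ∀ i, X i ≠ Y i)
    (hnadj : ∀ i, ¬ G.Adj (X i) (Y i))
    (hadjXX : ∀ i j, i ≠ j → G.Adj (X i) (X j))
    (hadjXY : ∀ i j, i ≠ j → G.Adj (X i) (Y j))
    (hadjYY : ∀ i j, i ≠ j → G.Adj (Y i) (Y j)) :
    aa ≤ d := by
  by_contra hd
  push_neg at hd
  have hex : ∀ i : Fin aa, ∃ j : Fin d, ¬ (I j).Adj (X i) (Y i) := by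
    intro i
    have := hnadj i
    rw [hcov] at this
    push_neg at this
    exact this (hne i)
  choose f hf using hex
  have hcard : Fintype.card (Fin d) < Fintype.card (Fin aa) := by simpa using hd
  obtain ⟨i, i', hii, hfe⟩ := Fintype.exists_ne_map_eq_of_card_lt f hcard
  have hni' : ¬ (I (f i)).Adj (X i') (Y i') := hfe ▸ hf i'
  refine four_point (hint (f i)) (X i) (Y i) (X i') (Y i') (hne i) (hne i')
    (hf i) hni' ?_ ?_ ?_ ?_
  · exact ((hcov _ _).mp (hadjXX i i' hii)).2 (f i)
  · exact ((hcov _ _).mp (hadjXY i i' hii)).2 (f i)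
  · exact ((hcov _ _).mp ((hadjXY i' i hii.symm).symm)).2 (f i)
  · exact ((hcov _ _).mp (hadjYY i i' hii)).2 (f i)

lemma prime_not_dvd_prod {ι : Type*} [DecidableEq ι] {P : ℕ} (hP : P.Prime)
    (s : Finset ι) (p n : ι → ℕ) (hp : ∀ i, (p i).Prime)
    (hne : ∀ j ∈ s, p j ≠ P) : ¬ P ∣ ∏ j ∈ s, p j ^ n j := by
  intro h
  obtain ⟨j, hj, hdvd⟩ := (Prime.dvd_finset_prod_iff hP.prime _).mp h
  have := hP.dvd_of_dvd_pow hdvd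
  exact hne j hj ((Nat.prime_dvd_prime_iff_eq hP (hp j)).mp this).symm

section pairs

variable {a : ℕ} {N : ℕ} {p n : Fin a → ℕ}

lemma pairs_nat (ha : 2 ≤ a) (hp : ∀ i, (p i).Prime) (hpinj : Function.Injective p)
    (hn : ∀ i, 0 < n i) (hN : N = ∏ i, p i ^ n i)
    (hmod : ¬ (N % 4 = 2 ∧ ∀ i, p i ≠ 2 → n i ≤ 2)) :
    ∃ u w : Fin a → ℕ, (∀ i, u i < w i) ∧ (∀ i, w i < N) ∧
      (∀ i, ¬ N ∣ u i * u i) ∧ (∀ i, ¬ N ∣ w i * w i) ∧ (∀ i, ¬ N ∣ u i * w i) ∧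
      (∀ i j, i ≠ j → N ∣ u i * u j) ∧ (∀ i j, i ≠ j → N ∣ u i * w j) ∧
      (∀ i j, i ≠ j → N ∣ w i * w j) := by
  classical
  set M : Fin a → ℕ := fun i => ∏ j ∈ Finset.univ.erase i, p j ^ n j with hM
  have hNeq : ∀ i, p i ^ n i * M i = N := by
    intro i
    rw [hN, hM]
    exact Finset.mul_prod_erase Finset.univ (fun j => p j ^ n j) (Finset.mem_univ i)
  have hMpos : ∀ i, 0 < M i := fun i =>
    Finset.prod_pos fun j _ => pow_pos (hp j).pos _
  have hNpos : 0 < N := by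
    rw [hN]; exact Finset.prod_pos fun j _ => pow_pos (hp j).pos _
  have hpM : ∀ i, ¬ p i ∣ M i := by
    intro i
    apply prime_not_dvd_prod (hp i) _ p n hp
    intro j hj
    intro hpe
    exact (Finset.mem_erase.mp hj).1 (hpinj hpe)
  have hMdvd : ∀ i c, c ≠ i → p c ^ n c ∣ M i := by
    intro i c hc
    exact Finset.dvd_prod_of_mem _ (Finset.mem_erase.mpr ⟨hc, Finset.mem_univ c⟩)
  have L3 : ∀ m : ℕ, (∀ i, p i ^ n i ∣ m) → N ∣ m := by
    intro m hm
    rw [hN]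
    apply prod_dvd_of_pairwise_coprime
    · intro i _ j _ hij
      exact Nat.Coprime.pow _ _ ((Nat.coprime_primes (hp i) (hp j)).mpr
        fun h => hij (hpinj h))
    · intro i _; exact hm i
  have notN : ∀ (i : Fin a) (m : ℕ), ¬ p i ^ n i ∣ m → ¬ N ∣ m := by
    intro i m h hNm
    exact h (dvd_trans ⟨M i, (hNeq i).symm⟩ hNm)
  have hplt : ∀ i, 2 ≤ p i ^ n i := by
    intro i
    have h1 := hn i
    calc 2 ≤ p i := (hp i).two_le
    _ ≤ p i ^ n i := Nat.le_self_pow (by omega) _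
  have hMlt : ∀ i, M i < N := by
    intro i
    have := hNeq i
    have h2 := hplt i
    have h3 := hMpos i
    nlinarith
  by_cases hcase : ∀ i, p i = 2 → 2 ≤ n i
  · -- Case A
    set c : Fin a → ℕ := fun i => if p i = 2 then 3 else 2 with hc
    have hc2 : ∀ i, 2 ≤ c i := by
      intro i; show 2 ≤ if p i = 2 then 3 else 2; split_ifs <;> omega
    have hpc : ∀ i, ¬ p i ∣ c i := by
      intro i
      show ¬ p i ∣ if p i = 2 then 3 else 2
      split_ifs with h
      · rw [h]; omega
      · intro hd
        exact h ((Nat.prime_dvd_prime_iff_eq (hp i) Nat.prime_two).mp hd)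
    have hclt : ∀ i, c i < p i ^ n i := by
      intro i
      show (if p i = 2 then 3 else 2) < p i ^ n i
      split_ifs with h
      · have h2 := hcase i h
        calc 3 < 2 ^ 2 := by omega
        _ ≤ p i ^ n i := by rw [h]; exact Nat.pow_le_pow_right (by omega) h2
      · have h3 : 3 ≤ p i := by
          have := (hp i).two_le
          rcases Nat.lt_or_ge (p i) 3 with h' | h'
          · interval_cases hpv : p i <;> simp_all
          · exact h'
        calc 2 < 3 := by omega
        _ ≤ p i := h3
        _ ≤ p i ^ n i := Nat.le_self_pow (by have := hn i; omega) _
    refine ⟨M, fun i => c i * M i, ?_, ?_, ?_, ?_, ?_, ?_, ?_, ?_⟩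
    · intro i
      have := hMpos i; have := hc2 i
      nlinarith
    · intro i
      have h1 := hclt i
      have h2 := hMpos i
      calc c i * M i < p i ^ n i * M i := by
            exact Nat.mul_lt_mul_of_lt_of_le h1 le_rfl h2
      _ = N := hNeq i
    · intro i
      exact notN i _ (not_dvd_of_prime_not_dvd (hp i)
        (fun h => ((hp i).dvd_mul.mp h).elim (hpM i) (hpM i)) (hn i))
    · intro i
      apply notN i _
      apply not_dvd_of_prime_not_dvd (hp i) _ (hn i)
      intro h
      rcases (hp i).dvd_mul.mp h with h' | h' <;>
        rcases (hp i).dvd_mul.mp h' with h'' | h''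
      · exact hpc i h''
      · exact hpM i h''
      · exact hpc i h''
      · exact hpM i h''
    · intro i
      apply notN i _
      apply not_dvd_of_prime_not_dvd (hp i) _ (hn i)
      intro h
      rcases (hp i).dvd_mul.mp h with h' | h'
      · exact hpM i h'
      · rcases (hp i).dvd_mul.mp h' with h'' | h''
        · exact hpc i h''
        · exact hpM i h''
    · intro i j hij
      apply L3
      intro k
      rcases eq_or_ne k i with rfl | hk
      · exact Dvd.dvd.mul_left (hMdvd j _ hij) _
      · exact Dvd.dvd.mul_right (hMdvd i k hk) _
    · intro i j hij
      have h1 : N ∣ M i * M j := by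
        apply L3
        intro k
        rcases eq_or_ne k i with rfl | hk
        · exact Dvd.dvd.mul_left (hMdvd j _ hij) _
        · exact Dvd.dvd.mul_right (hMdvd i k hk) _
      exact h1.trans ⟨c j, by ring⟩
    · intro i j hij
      have h1 : N ∣ M i * M j := by
        apply L3
        intro k
        rcases eq_or_ne k i with rfl | hk
        · exact Dvd.dvd.mul_left (hMdvd j _ hij) _
        · exact Dvd.dvd.mul_right (hMdvd i k hk) _
      exact h1.trans ⟨c i * c j, by ring⟩
  · -- Case B
    push_neg at hcase
    obtain ⟨i₂, hpi2, hni2lt⟩ := hcase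
    have hni2 : n i₂ = 1 := by have := hn i₂; omega
    have hModd : ¬ 2 ∣ M i₂ := by rw [← hpi2]; exact hpM i₂
    have hN2 : N = 2 * M i₂ := by rw [← hNeq i₂, hpi2, hni2]; ring
    have hNmod4 : N % 4 = 2 := by omega
    have hex : ¬ ∀ i, p i ≠ 2 → n i ≤ 2 := fun h => hmod ⟨hNmod4, h⟩
    push_neg at hex
    obtain ⟨k, hk2, hk3⟩ := hex
    have hm3 : 3 ≤ n k := by omega
    have hik : i₂ ≠ k := fun h => hk2 (h ▸ hpi2)
    have hpodd : ∀ i, i ≠ i₂ → p i ≠ 2 := fun i hi h => hi (hpinj (h.trans hpi2.symm))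
    set q := p k with hqdef
    set m := n k with hmdef
    have hqp : q.Prime := hp k
    have hq3 : 3 ≤ q := by
      have h2 := hqp.two_le
      have : q ≠ 2 := hk2
      omega
    have hq2' : ¬ q ∣ 2 := fun h => hk2 ((Nat.prime_dvd_prime_iff_eq hqp Nat.prime_two).mp h)
    have h2q : ¬ 2 ∣ q := fun h =>
      hk2 ((Nat.prime_dvd_prime_iff_eq Nat.prime_two hqp).mp h).symm
    have hqpos : 0 < q := hqp.pos
    set R := ∏ j ∈ (Finset.univ.erase i₂).erase k, p j ^ n j with hRdef
    have hki : k ≠ i₂ := fun h => hik h.symm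
    have hkmem : k ∈ Finset.univ.erase i₂ :=
      Finset.mem_erase.mpr ⟨hki, Finset.mem_univ k⟩
    have hNqR : N = 2 * (q ^ m * R) := by
      rw [hN, ← Finset.mul_prod_erase Finset.univ _ (Finset.mem_univ i₂),
        ← Finset.mul_prod_erase _ _ hkmem, hpi2, hni2, ← hqdef, ← hmdef, ← hRdef]
      ring
    have hRpos : 0 < R := Finset.prod_pos fun j _ => pow_pos (hp j).pos _
    have hR2 : ¬ 2 ∣ R := by
      apply prime_not_dvd_prod Nat.prime_two _ p n hp
      intro j hj h
      exact (Finset.mem_erase.mp (Finset.mem_erase.mp hj).2).1 (hpinj (h.trans hpi2.symm))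
    have hqR : ¬ q ∣ R := by
      apply prime_not_dvd_prod hqp _ p n hp
      intro j hj h
      exact (Finset.mem_erase.mp hj).1 (hpinj h)
    have hRdvd : ∀ c, c ≠ i₂ → c ≠ k → p c ^ n c ∣ R := fun c h1 h2 =>
      Finset.dvd_prod_of_mem _ (Finset.mem_erase.mpr ⟨h2,
        Finset.mem_erase.mpr ⟨h1, Finset.mem_univ c⟩⟩)
    set u : Fin a → ℕ := fun i => if i = i₂ then q ^ (m - 1) * R
      else if i = k then 2 * (q * R) else M i with hu
    set d : Fin a → ℕ := fun i => if i = i₂ then q + 2 else 2 with hd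
    have hui2 : u i₂ = q ^ (m - 1) * R := by simp [hu]
    have huk : u k = 2 * (q * R) := by simp [hu, hki]
    have huo : ∀ i, i ≠ i₂ → i ≠ k → u i = M i := by
      intro i h1 h2; simp [hu, h1, h2]
    have hdi2 : d i₂ = q + 2 := by simp [hd]
    have hdo : ∀ i, i ≠ i₂ → d i = 2 := by intro i h1; simp [hd, h1]
    have hd2 : ∀ i, 2 ≤ d i := by
      intro i
      rcases eq_or_ne i i₂ with rfl | h1
      · rw [hdi2]; omega
      · rw [hdo i h1]
    have hupos : ∀ i, 0 < u i := by
      intro i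
      rcases eq_or_ne i i₂ with rfl | h1
      · rw [hui2]; exact mul_pos (pow_pos hqpos _) hRpos
      rcases eq_or_ne i k with rfl | h2
      · rw [huk]; positivity
      · rw [huo i h1 h2]; exact hMpos i
    have hqm : q ^ m = q ^ (m - 1) * q := by
      rw [← pow_succ]; congr 1; omega
    -- F1
    have F1 : ∀ i c, c ≠ i₂ → c ≠ k → c ≠ i → p c ^ n c ∣ u i := by
      intro i c h1 h2 h3
      rcases eq_or_ne i i₂ with rfl | hi1
      · rw [hui2]; exact Dvd.dvd.mul_left (hRdvd c h1 h2) _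
      rcases eq_or_ne i k with rfl | hi2
      · rw [huk]; exact Dvd.dvd.mul_left ((hRdvd c h1 h2).mul_left q) 2
      · rw [huo i hi1 hi2]; exact hMdvd i c h3
    -- F2
    have F2 : ∀ i, i ≠ i₂ → 2 ∣ u i := by
      intro i h1
      rcases eq_or_ne i k with rfl | h2
      · rw [huk]; exact Dvd.intro _ rfl
      · rw [huo i h1 h2]
        have := hMdvd i i₂ (fun h => h1 h.symm)
        rwa [hpi2, hni2, pow_one] at this
    -- F3
    set τ : Fin a → ℕ := fun i => if i = i₂ then m - 1 else if i = k then 1 else m with hτ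
    have hτi2 : τ i₂ = m - 1 := by simp [hτ]
    have hτk : τ k = 1 := by simp [hτ, hki]
    have hτo : ∀ i, i ≠ i₂ → i ≠ k → τ i = m := by intro i h1 h2; simp [hτ, h1, h2]
    have F3 : ∀ i, q ^ τ i ∣ u i := by
      intro i
      rcases eq_or_ne i i₂ with rfl | h1
      · rw [hui2, hτi2]; exact Dvd.intro _ rfl
      rcases eq_or_ne i k with rfl | h2
      · rw [huk, hτk, pow_one]; exact ⟨2 * R, by ring⟩
      · rw [huo i h1 h2, hτo i h1 h2, hmdef, hqdef]
        exact hMdvd i k (fun h => h2 h.symm)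
    have hτsum : ∀ i j, i ≠ j → m ≤ τ i + τ j := by
      intro i j hij
      rcases eq_or_ne i i₂ with hi2 | hi2
      · have hj2 : j ≠ i₂ := fun h => hij (hi2.trans h.symm)
        rcases eq_or_ne j k with hjk | hjk
        · rw [hi2, hτi2, hjk, hτk]; omega
        · rw [hi2, hτi2, hτo j hj2 hjk]; omega
      rcases eq_or_ne i k with hik' | hik'
      · rcases eq_or_ne j i₂ with hj2 | hj2
        · rw [hik', hτk, hj2, hτi2]; omega
        · have hjk : j ≠ k := fun h => hij (hik'.trans h.symm)
          rw [hik', hτk, hτo j hj2 hjk]; omega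
      · rw [hτo i hi2 hik']; omega
    -- cross divisibility for u
    have hcross : ∀ i j, i ≠ j → N ∣ u i * u j := by
      intro i j hij
      apply L3
      intro c
      rcases eq_or_ne c i₂ with hc1 | hc1
      · rw [hc1, hpi2, hni2, pow_one]
        rcases eq_or_ne i i₂ with hi | hi
        · have hj : j ≠ i₂ := fun h => hij (hi.trans h.symm)
          exact Dvd.dvd.mul_left (F2 j hj) _
        · exact Dvd.dvd.mul_right (F2 i hi) _
      rcases eq_or_ne c k with hc2 | hc2
      · rw [hc2, ← hqdef, ← hmdef]
        calc q ^ m ∣ q ^ (τ i + τ j) := pow_dvd_pow q (hτsum i j hij)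
        _ ∣ u i * u j := by rw [pow_add]; exact mul_dvd_mul (F3 i) (F3 j)
      rcases eq_or_ne c i with hc3 | hc3
      · have hcj : c ≠ j := fun h => hij (hc3.symm.trans h)
        exact Dvd.dvd.mul_left (F1 j c hc1 hc2 hcj) _
      · exact Dvd.dvd.mul_right (F1 i c hc1 hc2 hc3) _
    -- intra non-divisibility
    have h2N : (2:ℕ) ∣ N := ⟨M i₂, hN2⟩
    have hoddND : ∀ x y : ℕ, ¬ 2 ∣ x → ¬ 2 ∣ y → ¬ N ∣ x * y := by
      intro x y hx hy h
      rcases Nat.prime_two.dvd_mul.mp (h2N.trans h) with h' | h'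
      · exact hx h'
      · exact hy h'
    have hoddu : ¬ 2 ∣ u i₂ := by
      rw [hui2]
      intro h
      rcases Nat.prime_two.dvd_mul.mp h with h' | h'
      · exact h2q (Nat.prime_two.dvd_of_dvd_pow h')
      · exact hR2 h'
    have hoddw : ¬ 2 ∣ d i₂ * u i₂ := by
      intro h
      rcases Nat.prime_two.dvd_mul.mp h with h' | h'
      · rw [hdi2] at h'; omega
      · exact hoddu h'
    have hqnd : ∀ s : ℕ, ¬ q ∣ s → ¬ N ∣ q ^ 2 * s := by
      intro s hs
      exact notN k _ (not_pow_dvd hqp hs (by omega))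
    have hq2R : ¬ q ∣ 2 * R := by
      intro h
      rcases hqp.dvd_mul.mp h with h' | h'
      · exact hq2' h'
      · exact hqR h'
    have hond : ∀ (i : Fin a), i ≠ i₂ → i ≠ k → ∀ s : ℕ, ¬ p i ∣ s → ¬ N ∣ s := by
      intro i h1 h2 s hs
      exact notN i _ (not_dvd_of_prime_not_dvd (hp i) hs (hn i))
    have hpi2' : ∀ (i : Fin a), i ≠ i₂ → ¬ p i ∣ 2 := fun i h1 h =>
      hpodd i h1 ((Nat.prime_dvd_prime_iff_eq (hp i) Nat.prime_two).mp h)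
    have intra : ∀ i, ¬ N ∣ u i * u i ∧ ¬ N ∣ (d i * u i) * (d i * u i) ∧
        ¬ N ∣ u i * (d i * u i) := by
      intro i
      rcases eq_or_ne i i₂ with rfl | h1
      · exact ⟨hoddND _ _ hoddu hoddu, hoddND _ _ hoddw hoddw, hoddND _ _ hoddu hoddw⟩
      rcases eq_or_ne i k with rfl | h2
      · rw [huk, hdo _ h1]
        refine ⟨?_, ?_, ?_⟩
        · rw [show 2 * (q * R) * (2 * (q * R)) = q ^ 2 * (2 * R * (2 * R)) from by ring]
          apply hqnd
          intro h
          rcases hqp.dvd_mul.mp h with h' | h' <;> exact hq2R h'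
        · rw [show 2 * (2 * (q * R)) * (2 * (2 * (q * R))) =
            q ^ 2 * (2 * (2 * R) * (2 * (2 * R))) from by ring]
          apply hqnd
          intro h
          rcases hqp.dvd_mul.mp h with h' | h' <;>
          · rcases hqp.dvd_mul.mp h' with h'' | h''
            · exact hq2' h''
            · exact hq2R h''
        · rw [show 2 * (q * R) * (2 * (2 * (q * R))) =
            q ^ 2 * (2 * R * (2 * (2 * R))) from by ring]
          apply hqnd
          intro h
          rcases hqp.dvd_mul.mp h with h' | h'
          · exact hq2R h'
          · rcases hqp.dvd_mul.mp h' with h'' | h''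
            · exact hq2' h''
            · exact hq2R h''
      · rw [huo i h1 h2, hdo i h1]
        have hpM' := hpM i
        have hp2 := hpi2' i h1
        refine ⟨hond i h1 h2 _ ?_, hond i h1 h2 _ ?_, hond i h1 h2 _ ?_⟩
        · intro h
          rcases (hp i).dvd_mul.mp h with h' | h' <;> exact hpM' h'
        · intro h
          rcases (hp i).dvd_mul.mp h with h' | h' <;>
          · rcases (hp i).dvd_mul.mp h' with h'' | h''
            · exact hp2 h''
            · exact hpM' h''
        · intro h
          rcases (hp i).dvd_mul.mp h with h' | h'
          · exact hpM' h'
          · rcases (hp i).dvd_mul.mp h' with h'' | h''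
            · exact hp2 h''
            · exact hpM' h''
    -- bounds
    have hwlt : ∀ i, d i * u i < N := by
      intro i
      rcases eq_or_ne i i₂ with rfl | h1
      · rw [hdi2, hui2]
        have h1' : (q + 2) * (q ^ (m - 1) * R) < (2 * q) * (q ^ (m - 1) * R) :=
          mul_lt_mul_of_pos_right (by omega) (mul_pos (pow_pos hqpos _) hRpos)
        have h2' : (2 * q) * (q ^ (m - 1) * R) = N := by rw [hNqR, hqm]; ring
        omega
      rcases eq_or_ne i k with rfl | h2
      · rw [hdo _ h1, huk]
        have hq9 : 2 < q ^ (m - 1) := by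
          have : q ^ 1 ≤ q ^ (m - 1) := Nat.pow_le_pow_right (by omega) (by omega)
          simp at this; omega
        have h1' : 2 * (2 * (q * R)) < 2 * (q ^ (m - 1) * (q * R)) := by
          have := mul_lt_mul_of_pos_right hq9 (mul_pos hqpos hRpos)
          omega
        have h2' : 2 * (q ^ (m - 1) * (q * R)) = N := by rw [hNqR, hqm]; ring
        omega
      · rw [hdo i h1, huo i h1 h2]
        have h3 : 3 ≤ p i := by
          have := (hp i).two_le
          have := hpodd i h1
          omega
        have h4 : 3 ≤ p i ^ n i := le_trans h3 (Nat.le_self_pow (by have := hn i; omega) _)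
        calc 2 * M i < p i ^ n i * M i :=
              mul_lt_mul_of_pos_right (by omega) (hMpos i)
        _ = N := hNeq i
    refine ⟨u, fun i => d i * u i, ?_, hwlt, fun i => (intra i).1, fun i => (intra i).2.1,
      fun i => (intra i).2.2, hcross, ?_, ?_⟩
    · intro i
      have := hupos i
      have := hd2 i
      nlinarith
    · intro i j hij
      exact (hcross i j hij).trans ⟨d j, by ring⟩
    · intro i j hij
      exact (hcross i j hij).trans ⟨d i * d j, by ring⟩

end pairs

theorem stmt_12 (N a : ℕ) (p n : Fin a → ℕ) (ha : 2 ≤ a)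
    (hp : ∀ i, (p i).Prime) (hmono : StrictMono p) (hn : ∀ i, 0 < n i)
    (hN : N = ∏ i, p i ^ n i)
    (hmod : ¬ (N % 4 = 2 ∧ ∀ i, p i ≠ 2 → n i ≤ 2)) :
    boxicity (zeroDivisorGraph (ZMod N)) = a := by
  classical
  have hpinj : Function.Injective p := hmono.injective
  have hNpos : 0 < N := by
    rw [hN]; exact Finset.prod_pos fun j _ => pow_pos (hp j).pos _
  haveI : NeZero N := ⟨hNpos.ne'⟩
  have hppN : ∀ i, p i ^ n i ∣ N := by
    intro i; rw [hN]; exact Finset.dvd_prod_of_mem _ (Finset.mem_univ i)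
  have L3 : ∀ m : ℕ, N ∣ m ↔ ∀ i, p i ^ n i ∣ m := by
    intro m
    constructor
    · intro h i; exact (hppN i).trans h
    · intro h
      rw [hN]
      apply prod_dvd_of_pairwise_coprime
      · intro i _ j _ hij
        exact Nat.Coprime.pow _ _ ((Nat.coprime_primes (hp i) (hp j)).mpr
          fun hh => hij (hpinj hh))
      · intro i _; exact h i
  have hzero : ∀ x y : ZMod N, x * y = 0 ↔ N ∣ x.val * y.val := by
    intro x y
    have e : ((x.val * y.val : ℕ) : ZMod N) = x * y := by
      push_cast
      rw [ZMod.natCast_val, ZMod.natCast_val, ZMod.cast_id, ZMod.cast_id]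
    rw [← e, ZMod.natCast_eq_zero_iff]
  set V := {x : ZMod N // x ≠ 0 ∧ ∃ y : ZMod N, y ≠ 0 ∧ x * y = 0} with hV
  set G := zeroDivisorGraph (ZMod N) with hG
  have hadj : ∀ u v : V, G.Adj u v ↔ u ≠ v ∧ (u.1 * v.1 = 0) := by
    intro u v
    rw [hG, zeroDivisorGraph, SimpleGraph.fromRel_adj]
    constructor
    · rintro ⟨h1, h2 | h2⟩
      · exact ⟨h1, h2⟩
      · exact ⟨h1, by rwa [mul_comm]⟩
    · rintro ⟨h1, h2⟩; exact ⟨h1, Or.inl h2⟩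
  have hvne : ∀ u : V, (u.1).val ≠ 0 := by
    intro u h
    exact u.2.1 ((ZMod.val_eq_zero u.1).mp h)
  -- interval graphs for the upper bound
  set I : Fin a → SimpleGraph V := fun i =>
    SimpleGraph.fromRel (fun u v => p i ^ n i ∣ (u.1).val * (v.1).val) with hI
  have hIadj : ∀ (i : Fin a) (u v : V), (I i).Adj u v ↔
      u ≠ v ∧ p i ^ n i ∣ (u.1).val * (v.1).val := by
    intro i u v
    rw [hI]
    rw [SimpleGraph.fromRel_adj]
    constructor
    · rintro ⟨h1, h2 | h2⟩
      · exact ⟨h1, h2⟩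
      · exact ⟨h1, by rwa [mul_comm]⟩
    · rintro ⟨h1, h2⟩; exact ⟨h1, Or.inl h2⟩
  have hint : ∀ i, IsIntervalGraph (I i) := by
    intro i
    have hεinj : Function.Injective (fun u : V => ((u.1).val : ℝ) / (2 * N)) := by
      intro u v h
      simp only at h
      have h2N : ((2:ℝ) * N) ≠ 0 := by positivity
      have h3 := congrArg (fun z : ℝ => z * (2 * N)) h
      rw [div_mul_cancel₀ _ h2N, div_mul_cancel₀ _ h2N] at h3
      have : ((u.1).val : ℝ) = ((v.1).val : ℝ) := h3
      have hval : (u.1).val = (v.1).val := Nat.cast_injective this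
      exact Subtype.ext (ZMod.val_injective N hval)
    obtain ⟨A, B, hAB⟩ := threshold_interval
      (fun u : V => min (((u.1).val).factorization (p i)) (n i)) (n i)
      (fun u : V => ((u.1).val : ℝ) / (2 * N)) hεinj
      (fun u => by positivity)
      (fun u => by
        rw [div_lt_iff₀ (by positivity)]
        have := ZMod.val_lt u.1
        have : ((u.1).val : ℝ) < N := by exact_mod_cast this
        linarith)
    refine ⟨A, B, fun u v huv => ?_⟩
    rw [hIadj i u v, ← hAB u v huv, dvd_iff_threshold (hp i) (hvne u) (hvne v)]
    simp [huv]
  have hcov : ∀ u v : V, G.Adj u v ↔ (u ≠ v ∧ ∀ i, (I i).Adj u v) := by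
    intro u v
    rw [hadj u v]
    constructor
    · rintro ⟨h1, h2⟩
      refine ⟨h1, fun i => (hIadj i u v).mpr ⟨h1, ?_⟩⟩
      exact ((L3 _).mp ((hzero _ _).mp h2)) i
    · rintro ⟨h1, h2⟩
      refine ⟨h1, (hzero _ _).mpr ((L3 _).mpr fun i => ?_)⟩
      exact ((hIadj i u v).mp (h2 i)).2
  have haS : a ∈ {d : ℕ | ∃ I : Fin d → SimpleGraph V, (∀ i, IsIntervalGraph (I i)) ∧
      ∀ u v : V, G.Adj u v ↔ (u ≠ v ∧ ∀ i, (I i).Adj u v)} := ⟨I, hint, hcov⟩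
  -- the pairs
  obtain ⟨u, w, hulw, hwN, huu, hww, huw, hcuu, hcuw, hcww⟩ :=
    pairs_nat ha hp hpinj hn hN hmod
  set zx : Fin a → ZMod N := fun i => (u i : ZMod N) with hzx
  set zy : Fin a → ZMod N := fun i => (w i : ZMod N) with hzy
  have hcast : ∀ s t : ℕ, (s : ZMod N) * (t : ZMod N) = 0 ↔ N ∣ s * t := by
    intro s t
    rw [← Nat.cast_mul, ZMod.natCast_eq_zero_iff]
  have hxx : ∀ i, zx i * zx i ≠ 0 := fun i h => huu i ((hcast _ _).mp h)
  have hyy : ∀ i, zy i * zy i ≠ 0 := fun i h => hww i ((hcast _ _).mp h)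
  have hxy : ∀ i, zx i * zy i ≠ 0 := fun i h => huw i ((hcast _ _).mp h)
  have hcxx : ∀ i j, i ≠ j → zx i * zx j = 0 := fun i j hij =>
    (hcast _ _).mpr (hcuu i j hij)
  have hcxy : ∀ i j, i ≠ j → zx i * zy j = 0 := fun i j hij =>
    (hcast _ _).mpr (hcuw i j hij)
  have hcyy : ∀ i j, i ≠ j → zy i * zy j = 0 := fun i j hij =>
    (hcast _ _).mpr (hcww i j hij)
  have hxney : ∀ i, zx i ≠ zy i := by
    intro i h
    have h1 : u i < N := lt_trans (hulw i) (hwN i)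
    have := congrArg ZMod.val h
    rw [hzx, hzy] at this
    simp only at this
    rw [ZMod.val_cast_of_lt h1, ZMod.val_cast_of_lt (hwN i)] at this
    exact absurd this (Nat.ne_of_lt (hulw i))
  have hxne0 : ∀ i, zx i ≠ 0 := fun i h => hxx i (by rw [h, zero_mul])
  have hyne0 : ∀ i, zy i ≠ 0 := fun i h => hyy i (by rw [h, zero_mul])
  have hother : ∀ i : Fin a, ∃ j : Fin a, j ≠ i := by
    intro i
    rcases eq_or_ne i ⟨0, by omega⟩ with h | h
    · exact ⟨⟨1, by omega⟩, by rw [h]; exact fun hh => by simpa using Fin.mk.inj_iff.mp hh⟩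
    · exact ⟨⟨0, by omega⟩, fun hh => h hh.symm⟩
  have hmemx : ∀ i, (zx i ≠ 0 ∧ ∃ y : ZMod N, y ≠ 0 ∧ zx i * y = 0) := by
    intro i
    obtain ⟨j, hj⟩ := hother i
    exact ⟨hxne0 i, zx j, hxne0 j, hcxx i j (fun h => hj h.symm)⟩
  have hmemy : ∀ i, (zy i ≠ 0 ∧ ∃ y : ZMod N, y ≠ 0 ∧ zy i * y = 0) := by
    intro i
    obtain ⟨j, hj⟩ := hother i
    exact ⟨hyne0 i, zy j, hyne0 j, hcyy i j (fun h => hj h.symm)⟩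
  set X : Fin a → V := fun i => ⟨zx i, hmemx i⟩ with hX
  set Y : Fin a → V := fun i => ⟨zy i, hmemy i⟩ with hY
  have hlow : ∀ dd ∈ {d : ℕ | ∃ I : Fin d → SimpleGraph V, (∀ i, IsIntervalGraph (I i)) ∧
      ∀ u v : V, G.Adj u v ↔ (u ≠ v ∧ ∀ i, (I i).Adj u v)}, a ≤ dd := by
    rintro dd ⟨J, hJint, hJcov⟩
    apply pairs_le G J hJint hJcov X Y
    · intro i h
      exact hxney i (congrArg Subtype.val h)
    · intro i h
      exact hxy i ((hadj _ _).mp h).2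
    · intro i j hij
      refine (hadj _ _).mpr ⟨?_, hcxx i j hij⟩
      intro h
      have : zx i = zx j := congrArg Subtype.val h
      apply hxx i
      nth_rewrite 2 [this]
      exact hcxx i j hij
    · intro i j hij
      refine (hadj _ _).mpr ⟨?_, hcxy i j hij⟩
      intro h
      have : zx i = zy j := congrArg Subtype.val h
      apply hxx i
      nth_rewrite 2 [this]
      exact hcxy i j hij
    · intro i j hij
      refine (hadj _ _).mpr ⟨?_, hcyy i j hij⟩
      intro h
      have : zy i = zy j := congrArg Subtype.val h
      apply hyy i
      nth_rewrite 2 [this]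
      exact hcyy i j hij
  rw [boxicity]
  exact le_antisymm (Nat.sInf_le haS) (le_csInf ⟨a, haS⟩ hlow)
end

section
/- Let N = p_1^{n_1} ··· p_a^{n_a} with a ≥ 2. Then a - 1 ≤ dim_TH(Γ(Z_N)) ≤ a, where dim_TH is the threshold dimension. -/
/-- If `G` has `k` pairs `(x j, y j)` of distinct non-adjacent vertices with all cross
pairs adjacent, then `k ≤ thresholdDim G`. -/
lemma aux_le_thresholdDim {V : Type*} {G : SimpleGraph V} {k : ℕ} (x y : Fin k → V)
    (hne : ∀ j, x j ≠ y j) (hnadj : ∀ j, ¬ G.Adj (x j) (y j))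
    (hcross : ∀ j l, j ≠ l → G.Adj (x j) (y l))
    (hnonempty : {d : ℕ | ∃ I : Fin d → SimpleGraph V, (∀ i, IsThresholdGraph (I i)) ∧
      ∀ u v : V, G.Adj u v ↔ (u ≠ v ∧ ∀ i, (I i).Adj u v)}.Nonempty) :
    k ≤ thresholdDim G := by
  apply le_csInf hnonempty
  rintro d ⟨I, hI, hGI⟩
  have hσ : ∀ j, ∃ i, ¬ (I i).Adj (x j) (y j) := by
    intro j
    by_contra h
    push_neg at h
    exact hnadj j ((hGI (x j) (y j)).mpr ⟨hne j, h⟩)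
  choose σ hσ using hσ
  have hinj : Function.Injective σ := by
    intro j l hjl
    by_contra hne'
    obtain ⟨w, S, hw⟩ := hI (σ j)
    have e1 : G.Adj (x j) (y l) := hcross j l hne'
    have e2 : G.Adj (x l) (y j) := hcross l j (Ne.symm hne')
    have a1 : S ≤ w (x j) + w (y l) :=
      (hw _ _ e1.ne).mp (((hGI _ _).mp e1).2 (σ j))
    have a2 : S ≤ w (x l) + w (y j) := by
      have := ((hGI _ _).mp e2).2 (σ l)
      rw [← hjl] at this
      exact (hw _ _ e2.ne).mp this
    have b1 : ¬ S ≤ w (x j) + w (y j) := fun h => hσ j ((hw _ _ (hne j)).mpr h)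
    have b2 : ¬ S ≤ w (x l) + w (y l) := by
      intro h
      have := (hw _ _ (hne l)).mpr h
      rw [hjl] at this
      exact hσ l this
    push_neg at b1 b2
    linarith
  calc k = Fintype.card (Fin k) := (Fintype.card_fin k).symm
    _ ≤ Fintype.card (Fin d) := Fintype.card_le_of_injective σ hinj
    _ = d := Fintype.card_fin d

/-- A product of powers of distinct primes divides `m` iff each power does. -/
lemma aux_prod_dvd {a : ℕ} (p n : Fin a → ℕ) (hp : ∀ i, (p i).Prime)
    (hinj : Function.Injective p) (m : ℕ) : (∏ i, p i ^ n i) ∣ m ↔ ∀ i, p i ^ n i ∣ m := by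
  constructor
  · exact fun h i => (Finset.dvd_prod_of_mem _ (Finset.mem_univ i)).trans h
  · intro h
    have key : ∀ s : Finset (Fin a), (∏ i ∈ s, p i ^ n i) ∣ m := by
      intro s
      induction s using Finset.induction_on with
      | empty => simp
      | @insert i s hnot ih =>
        rw [Finset.prod_insert hnot]
        refine Nat.Coprime.mul_dvd_of_dvd_of_dvd ?_ (h i) ih
        refine Nat.Coprime.prod_right fun j hj => ?_
        exact (((Nat.coprime_primes (hp i) (hp j)).mpr
          (fun he => hnot (hinj he ▸ hj))).pow _ _)
    exact key Finset.univ

lemma aux_adj (N : ℕ) [NeZero N]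
    (u v : {x : ZMod N // x ≠ 0 ∧ ∃ y : ZMod N, y ≠ 0 ∧ x * y = 0}) :
    (zeroDivisorGraph (ZMod N)).Adj u v ↔ u ≠ v ∧ (u : ZMod N) * (v : ZMod N) = 0 := by
  rw [zeroDivisorGraph, SimpleGraph.fromRel_adj]
  rw [mul_comm (v : ZMod N) (u : ZMod N), or_self]

lemma aux_mul_eq_zero (N : ℕ) [NeZero N] (u v : ZMod N) :
    u * v = 0 ↔ N ∣ u.val * v.val := by
  rw [← ZMod.natCast_eq_zero_iff, Nat.cast_mul, ZMod.natCast_zmod_val,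
    ZMod.natCast_zmod_val]

theorem stmt_13 (N a : ℕ) (p n : Fin a → ℕ) (ha : 2 ≤ a)
    (hp : ∀ i, (p i).Prime) (hmono : StrictMono p) (hn : ∀ i, 0 < n i)
    (hN : N = ∏ i, p i ^ n i) :
    a - 1 ≤ thresholdDim (zeroDivisorGraph (ZMod N)) ∧
    thresholdDim (zeroDivisorGraph (ZMod N)) ≤ a := by
  have hN0 : N ≠ 0 := by
    rw [hN]
    exact Finset.prod_ne_zero_iff.mpr fun i _ => pow_ne_zero _ (hp i).pos.ne'
  haveI : NeZero N := ⟨hN0⟩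
  have hpinj : Function.Injective p := hmono.injective
  have hval_ne : ∀ u : {x : ZMod N // x ≠ 0 ∧ ∃ y : ZMod N, y ≠ 0 ∧ x * y = 0},
      (u : ZMod N).val ≠ 0 := fun u h => u.2.1 ((ZMod.val_eq_zero _).mp h)
  -- the decomposition into `a` threshold graphs
  set V := {x : ZMod N // x ≠ 0 ∧ ∃ y : ZMod N, y ≠ 0 ∧ x * y = 0} with hV
  let I : Fin a → SimpleGraph V := fun i =>
    SimpleGraph.fromRel (fun u v => p i ^ n i ∣ (u : ZMod N).val * (v : ZMod N).val)
  have hIadj : ∀ (i : Fin a) (u v : V),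
      (I i).Adj u v ↔ u ≠ v ∧ p i ^ n i ∣ (u : ZMod N).val * (v : ZMod N).val := by
    intro i u v
    rw [SimpleGraph.fromRel_adj, mul_comm ((v : ZMod N).val) ((u : ZMod N).val), or_self]
  have hIthr : ∀ i, IsThresholdGraph (I i) := by
    intro i
    refine ⟨fun u => ((min ((u : ZMod N).val.factorization (p i)) (n i) : ℕ) : ℝ),
      (n i : ℝ), fun u v huv => ?_⟩
    rw [hIadj i u v, (hp i).pow_dvd_iff_le_factorization
        (Nat.mul_ne_zero (hval_ne u) (hval_ne v)),
      Nat.factorization_mul (hval_ne u) (hval_ne v), Finsupp.add_apply]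
    have hnat : n i ≤ (u : ZMod N).val.factorization (p i) +
        (v : ZMod N).val.factorization (p i) ↔
        n i ≤ min ((u : ZMod N).val.factorization (p i)) (n i) +
          min ((v : ZMod N).val.factorization (p i)) (n i) := by omega
    rw [iff_true_intro huv, true_and, hnat]
    beta_reduce
    constructor
    · intro h; exact_mod_cast h
    · intro h; exact_mod_cast h
  have hIint : ∀ u v : V, (zeroDivisorGraph (ZMod N)).Adj u v ↔
      (u ≠ v ∧ ∀ i, (I i).Adj u v) := by
    intro u v
    have hNdvd : ∀ m : ℕ, N ∣ m ↔ ∀ i, p i ^ n i ∣ m := fun m => by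
      rw [hN]; exact aux_prod_dvd p n hp hpinj m
    rw [aux_adj, aux_mul_eq_zero, hNdvd]
    constructor
    · rintro ⟨huv, hdvd⟩
      exact ⟨huv, fun i => (hIadj i u v).mpr ⟨huv, hdvd i⟩⟩
    · rintro ⟨huv, hall⟩
      exact ⟨huv, fun i => ((hIadj i u v).mp (hall i)).2⟩
  have hmem : ∃ I : Fin a → SimpleGraph V, (∀ i, IsThresholdGraph (I i)) ∧
      ∀ u v : V, (zeroDivisorGraph (ZMod N)).Adj u v ↔ (u ≠ v ∧ ∀ i, (I i).Adj u v) :=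
    ⟨I, hIthr, hIint⟩
  have upper : thresholdDim (zeroDivisorGraph (ZMod N)) ≤ a := Nat.sInf_le hmem
  -- lower bound
  let ι : Fin (a - 1) → Fin a := fun j => ⟨j.1 + 1, by omega⟩
  have hιinj : Function.Injective ι := by
    intro j l h
    have : j.1 + 1 = l.1 + 1 := congrArg Fin.val h
    exact Fin.ext (by omega)
  let z : Fin a := ⟨0, by omega⟩
  have hι0 : ∀ j, z ≠ ι j := fun j h => by
    have : (0 : ℕ) = j.1 + 1 := congrArg Fin.val h
    omega
  let M : Fin (a - 1) → ℕ := fun j => ∏ i ∈ Finset.univ.erase (ι j), p i ^ n i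
  have hMN : ∀ j, p (ι j) ^ n (ι j) * M j = N := fun j => by
    rw [hN]
    exact Finset.mul_prod_erase Finset.univ (fun i => p i ^ n i) (Finset.mem_univ (ι j))
  have hq3 : ∀ j, 3 ≤ p (ι j) := by
    intro j
    have h1 : p z < p (ι j) := hmono (by simp [Fin.lt_def, z, ι])
    have h2 := (hp z).two_le
    omega
  have hqn3 : ∀ j, 3 ≤ p (ι j) ^ n (ι j) := fun j =>
    le_trans (hq3 j) (Nat.le_self_pow (hn _).ne' _)
  have hM1 : ∀ j, 1 ≤ M j := fun j =>
    Finset.prod_pos (fun i _ => pow_pos (hp i).pos _)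
  have hM3N : ∀ j, 3 * M j ≤ N := fun j => by
    rw [← hMN j]; exact Nat.mul_le_mul_right _ (hqn3 j)
  have h2M : ∀ j, 2 ≤ M j := by
    intro j
    have hmem0 : z ∈ Finset.univ.erase (ι j) :=
      Finset.mem_erase.mpr ⟨hι0 j, Finset.mem_univ _⟩
    have h1 : p z ^ n z ≤ M j :=
      Finset.single_le_prod' (fun i _ => Nat.one_le_iff_ne_zero.mpr
        (pow_ne_zero _ (hp i).pos.ne')) hmem0
    have h2 : 2 ≤ p z ^ n z := le_trans (hp z).two_le (Nat.le_self_pow (hn _).ne' _)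
    omega
  have hqnltN : ∀ j, p (ι j) ^ n (ι j) < N := by
    intro j
    have h1 : p (ι j) ^ n (ι j) * 2 ≤ p (ι j) ^ n (ι j) * M j :=
      Nat.mul_le_mul_left _ (h2M j)
    rw [hMN j] at h1
    have := hqn3 j
    omega
  have hcastM_ne : ∀ j, ((M j : ℕ) : ZMod N) ≠ 0 := by
    intro j h
    rw [ZMod.natCast_eq_zero_iff] at h
    have h1 := Nat.le_of_dvd (hM1 j) h
    have h2 := hM3N j
    have h3 := hM1 j
    omega
  have hcastq_ne : ∀ j, ((p (ι j) ^ n (ι j) : ℕ) : ZMod N) ≠ 0 := by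
    intro j h
    rw [ZMod.natCast_eq_zero_iff] at h
    have h1 := Nat.le_of_dvd (by have := hqn3 j; omega) h
    have := hqnltN j
    omega
  have hMq0 : ∀ j, ((M j : ℕ) : ZMod N) * ((p (ι j) ^ n (ι j) : ℕ) : ZMod N) = 0 := by
    intro j
    rw [← Nat.cast_mul, mul_comm (M j), hMN j, ZMod.natCast_self]
  let x : Fin (a - 1) → V := fun j =>
    ⟨(M j : ZMod N), hcastM_ne j, ⟨_, hcastq_ne j, hMq0 j⟩⟩
  let y : Fin (a - 1) → V := fun j =>
    ⟨-(M j : ZMod N), neg_ne_zero.mpr (hcastM_ne j),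
      ⟨_, hcastq_ne j, by rw [neg_mul, hMq0 j, neg_zero]⟩⟩
  -- coprimality of p (ι j) with M j
  have hcop : ∀ j, Nat.Coprime (p (ι j)) (M j) := by
    intro j
    refine Nat.Coprime.prod_right fun i hi => ?_
    exact (((Nat.coprime_primes (hp _) (hp i)).mpr
      (fun he => (Finset.mem_erase.mp hi).1 (hpinj he).symm)).pow_right _)
  have hne : ∀ j, x j ≠ y j := by
    intro j hxy
    have h : ((M j : ℕ) : ZMod N) = -((M j : ℕ) : ZMod N) := congrArg Subtype.val hxy
    have h2 : ((M j + M j : ℕ) : ZMod N) = 0 := by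
      push_cast
      exact eq_neg_iff_add_eq_zero.mp h
    rw [ZMod.natCast_eq_zero_iff] at h2
    have h3 := Nat.le_of_dvd (by have := hM1 j; omega) h2
    have h4 := hM3N j
    have h5 := hM1 j
    omega
  have hnadj : ∀ j, ¬ (zeroDivisorGraph (ZMod N)).Adj (x j) (y j) := by
    intro j hadj
    obtain ⟨-, hprod⟩ := (aux_adj N _ _).mp hadj
    have h0 : ((M j * M j : ℕ) : ZMod N) = 0 := by
      have : ((x j : ZMod N)) * ((y j : ZMod N)) = -(((M j * M j : ℕ)) : ZMod N) := by
        show ((M j : ℕ) : ZMod N) * (-((M j : ℕ) : ZMod N)) = _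
        push_cast
        ring
      rw [this] at hprod
      exact neg_eq_zero.mp hprod
    rw [ZMod.natCast_eq_zero_iff] at h0
    have hpdvd : p (ι j) ∣ M j * M j := by
      refine dvd_trans ?_ h0
      exact dvd_trans (dvd_pow_self _ (hn _).ne') ⟨M j, (hMN j).symm⟩
    have hpM : p (ι j) ∣ M j := by
      rcases (hp _).dvd_mul.mp hpdvd with h | h <;> exact h
    exact ((hp _).coprime_iff_not_dvd.mp (hcop j)) hpM
  have hcross : ∀ j l, j ≠ l →
      (zeroDivisorGraph (ZMod N)).Adj (x j) (y l) := by
    intro j l hjl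
    refine (aux_adj N _ _).mpr ⟨?_, ?_⟩
    · intro hxy
      have h : ((M j : ℕ) : ZMod N) = -((M l : ℕ) : ZMod N) := congrArg Subtype.val hxy
      have h2 : ((M j + M l : ℕ) : ZMod N) = 0 := by
        push_cast
        exact eq_neg_iff_add_eq_zero.mp h
      rw [ZMod.natCast_eq_zero_iff] at h2
      have h3 := Nat.le_of_dvd (by have := hM1 j; have := hM1 l; omega) h2
      have h4 := hM3N j
      have h5 := hM3N l
      have h6 := hM1 j
      have h7 := hM1 l
      omega
    · have hdvd : N ∣ M j * M l := by
        rw [hN, aux_prod_dvd p n hp hpinj]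
        intro i
        by_cases hij : i = ι j
        · have hil : i ≠ ι l := fun h => hjl (hιinj (hij ▸ h))
          exact Dvd.dvd.mul_left
            (Finset.dvd_prod_of_mem _ (Finset.mem_erase.mpr ⟨hil, Finset.mem_univ _⟩)) _
        · exact Dvd.dvd.mul_right
            (Finset.dvd_prod_of_mem _ (Finset.mem_erase.mpr ⟨hij, Finset.mem_univ _⟩)) _
      have h0 : ((M j * M l : ℕ) : ZMod N) = 0 := by
        rw [ZMod.natCast_eq_zero_iff]; exact hdvd
      show ((M j : ℕ) : ZMod N) * (-((M l : ℕ) : ZMod N)) = 0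
      have : ((M j : ℕ) : ZMod N) * (-((M l : ℕ) : ZMod N)) =
          -(((M j * M l : ℕ)) : ZMod N) := by push_cast; ring
      rw [this, h0, neg_zero]
  have lower := aux_le_thresholdDim x y hne hnadj hcross ⟨a, hmem⟩
  exact ⟨lower, upper⟩
end

section
/- Let R' = (Z/2)^k with k ≥ 2. Then box(Γ(R')) ≤ k: for each coordinate i, letting A_i be the set of vertices with i-th coordinate 1, and assigning vertex v a point interval [g(v), g(v)] ⊆ [0,1] (g injective) if v ∈ A_i and the interval [0,1] otherwise, yields k interval graphs whose edge intersection equals E(Γ(R')). -/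
theorem stmt_17 (k : ℕ) (hk : 2 ≤ k) :
    boxicity (zeroDivisorGraph (Fin k → ZMod 2)) ≤ k := by
  classical
  apply Nat.sInf_le
  have : Finite {x : Fin k → ZMod 2 // x ≠ 0 ∧ ∃ y : Fin k → ZMod 2, y ≠ 0 ∧ x * y = 0} :=
    Subtype.finite
  obtain ⟨n, ⟨e⟩⟩ := Finite.exists_equiv_fin
    {x : Fin k → ZMod 2 // x ≠ 0 ∧ ∃ y : Fin k → ZMod 2, y ≠ 0 ∧ x * y = 0}
  set g : {x : Fin k → ZMod 2 // x ≠ 0 ∧ ∃ y : Fin k → ZMod 2, y ≠ 0 ∧ x * y = 0} → ℝ :=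
    fun v => ((e v : ℕ) : ℝ) with hg
  have hginj : Function.Injective g := fun u v h =>
    e.injective (Fin.ext (Nat.cast_injective h))
  have hgmem : ∀ v, g v ∈ Set.Icc (0:ℝ) n := fun v =>
    ⟨Nat.cast_nonneg _, Nat.cast_le.mpr (e v).is_lt.le⟩
  refine ⟨fun i => SimpleGraph.fromRel
    (fun u v => (u : Fin k → ZMod 2) i = 0 ∨ (v : Fin k → ZMod 2) i = 0), ?_, ?_⟩
  · intro i
    refine ⟨fun v => if (v : Fin k → ZMod 2) i = 0 then 0 else g v,
            fun v => if (v : Fin k → ZMod 2) i = 0 then n else g v, ?_⟩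
    intro u v huv
    simp only [SimpleGraph.fromRel_adj]
    by_cases hu : (u : Fin k → ZMod 2) i = 0 <;>
      by_cases hv : (v : Fin k → ZMod 2) i = 0 <;>
      simp only [hu, hv, if_pos, if_neg, if_true, if_false, not_false_iff]
    · constructor
      · intro _
        exact ⟨0, ⟨le_refl 0, Nat.cast_nonneg n⟩, ⟨le_refl 0, Nat.cast_nonneg n⟩⟩
      · intro _; exact ⟨huv, by tauto⟩
    · constructor
      · intro _
        exact ⟨g v, ⟨(hgmem v).1, (hgmem v).2⟩, le_refl _, le_refl _⟩
      · intro _; exact ⟨huv, by tauto⟩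
    · constructor
      · intro _
        exact ⟨g u, ⟨le_refl _, le_refl _⟩, (hgmem u).1, (hgmem u).2⟩
      · intro _; exact ⟨huv, by tauto⟩
    · constructor
      · rintro ⟨-, (h | h) | (h | h)⟩ <;> exact absurd h (by tauto)
      · rintro ⟨x, ⟨h1, h2⟩, h3, h4⟩
        exact absurd (hginj (le_antisymm h2 h1 ▸ le_antisymm h4 h3 ▸ rfl : g u = g v)) huv
  · intro u v
    simp only [zeroDivisorGraph, SimpleGraph.fromRel_adj]
    constructor
    · rintro ⟨hne, h⟩
      have h' : (u : Fin k → ZMod 2) * v = 0 := by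
        rcases h with h | h
        · exact h
        · rw [mul_comm]; exact h
      refine ⟨hne, fun i => ⟨hne, Or.inl ?_⟩⟩
      have := congrFun h' i
      simpa [mul_eq_zero] using this
    · rintro ⟨hne, h⟩
      refine ⟨hne, Or.inl ?_⟩
      funext i
      obtain ⟨-, hh⟩ := h i
      have : (u : Fin k → ZMod 2) i = 0 ∨ (v : Fin k → ZMod 2) i = 0 := by tauto
      simpa [mul_eq_zero] using this
end

section
/- Let N = p_1^{n_1} ··· p_a^{n_a} with a ≥ 2 and p_1 the smallest prime divisor. The set { p_1·u : 1 ≤ u < √(N/p_1^2) } is an independent set in Γ(Z_N) of size at least ⌊√(N/p_1^2)⌋ - 1; hence the independence number of Γ(Z_N) is at least ⌊√(N/p_1^2)⌋ - 1. -/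
theorem stmt_19 (N a : ℕ) (p n : Fin a → ℕ) (ha : 2 ≤ a)
    (hp : ∀ i, (p i).Prime) (hmono : StrictMono p) (hn : ∀ i, 0 < n i)
    (hN : N = ∏ i, p i ^ n i)
    (p1 : ℕ) (hp1 : p1 = p ⟨0, by omega⟩)
    (s : Set ℕ)
    (hs : s = {m : ℕ | ∃ u : ℕ, 1 ≤ u ∧
      (u : ℝ) < Real.sqrt ((N : ℝ) / (p1 : ℝ) ^ 2) ∧ m = p1 * u}) :
    -- every element of s is a nonzero zero divisor of Z_N
    (∀ x ∈ s, 1 ≤ x ∧ x < N ∧ ∃ y, 1 ≤ y ∧ y < N ∧ N ∣ x * y) ∧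
    -- s is an independent set in Γ(Z_N)
    (∀ x ∈ s, ∀ y ∈ s, x ≠ y → ¬ N ∣ x * y) ∧
    -- s has size at least ⌊√(N/p1²)⌋ - 1
    ⌊Real.sqrt ((N : ℝ) / (p1 : ℝ) ^ 2)⌋₊ - 1 ≤ s.ncard := by
  have hp1prime : p1.Prime := hp1 ▸ hp ⟨0, by omega⟩
  have hp1pos : 0 < p1 := hp1prime.pos
  have hp2 : 2 ≤ p1 := hp1prime.two_le
  have hNpos : 0 < N := by
    rw [hN]; exact Finset.prod_pos (fun i _ => pow_pos (hp i).pos _)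
  have hdvd : p1 ∣ N := by
    rw [hN, hp1]
    exact dvd_trans (dvd_pow_self _ (hn ⟨0, by omega⟩).ne')
      (Finset.dvd_prod_of_mem _ (Finset.mem_univ _))
  set B := Real.sqrt ((N : ℝ) / (p1 : ℝ) ^ 2) with hB
  have hmem : ∀ x ∈ s, ∃ u : ℕ, 1 ≤ u ∧ x = p1 * u ∧ x ^ 2 < N := by
    intro x hx
    rw [hs] at hx
    obtain ⟨u, hu1, huB, hxu⟩ := hx
    refine ⟨u, hu1, hxu, ?_⟩
    have h1 : ((u : ℝ)) ^ 2 < (N : ℝ) / (p1 : ℝ) ^ 2 :=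
      (Real.lt_sqrt (by positivity)).mp huB
    have hp1R : (0 : ℝ) < (p1 : ℝ) ^ 2 := by positivity
    have h2 : ((p1 * u : ℕ) : ℝ) ^ 2 < (N : ℝ) := by
      push_cast
      calc ((p1 : ℝ) * u) ^ 2 = (u : ℝ) ^ 2 * (p1 : ℝ) ^ 2 := by ring
        _ < (N : ℝ) / (p1 : ℝ) ^ 2 * (p1 : ℝ) ^ 2 := by
            exact mul_lt_mul_of_pos_right h1 hp1R
        _ = (N : ℝ) := by field_simp
    rw [hxu]
    exact_mod_cast h2
  refine ⟨?_, ?_, ?_⟩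
  · intro x hx
    obtain ⟨u, hu1, hxu, hx2⟩ := hmem x hx
    have hx1 : 1 ≤ x := by
      rw [hxu]; exact Nat.one_le_iff_ne_zero.mpr (by positivity)
    refine ⟨hx1, lt_of_le_of_lt (by nlinarith) hx2, N / p1, ?_, ?_, ?_⟩
    · exact Nat.one_le_div_iff hp1pos |>.mpr (Nat.le_of_dvd hNpos hdvd)
    · exact Nat.div_lt_self hNpos hp2
    · have : x * (N / p1) = u * N := by
        rw [hxu, mul_comm p1 u, mul_assoc, Nat.mul_div_cancel' hdvd]
      rw [this]; exact dvd_mul_left N u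
  · intro x hx y hy hxy hNdvd
    obtain ⟨u, hu1, hxu, hx2⟩ := hmem x hx
    obtain ⟨v, hv1, hyv, hy2⟩ := hmem y hy
    have hxypos : 0 < x * y := by
      have : 0 < x := by rw [hxu]; positivity
      have : 0 < y := by rw [hyv]; positivity
      positivity
    have hlt : x * y < N := by
      rcases le_total x y with h | h <;> nlinarith
    exact absurd (Nat.le_of_dvd hxypos hNdvd) (not_le.mpr hlt)
  · have hseq : s = ↑((Finset.Ico 1 ⌈B⌉₊).image (fun u => p1 * u)) := by
      rw [hs]
      ext m
      simp only [Finset.coe_image, Set.mem_image, Finset.coe_Ico, Set.mem_Ico,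
        Set.mem_setOf_eq, Nat.lt_ceil]
      constructor
      · rintro ⟨u, h1, h2, h3⟩; exact ⟨u, ⟨h1, h2⟩, h3.symm⟩
      · rintro ⟨u, ⟨h1, h2⟩, h3⟩; exact ⟨u, h1, h2, h3.symm⟩
    rw [hseq, Set.ncard_coe_finset,
      Finset.card_image_of_injective _ (mul_right_injective₀ hp1pos.ne'),
      Nat.card_Ico]
    have := Nat.floor_le_ceil B
    omega
end
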